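/- arXiv:2401.02065 — 6 statements merged into one kernel-verified Lean document; each statement's English description precedes it below -/
import Mathlib

section
/- Let (A, m_A, i_A) and (B, m_B, i_B) be Q-systems in Hilb and let (H, Q1, Q2) be a quantum bi-element of the pair (A, B). Then the Frobenius identities hold for Q1: (m_A ⊗ 1_H)∘(1_A ⊗ Q1) = Q1∘Q1* = (1_A ⊗ Q1*)∘(m_A* ⊗ 1_H) as linear maps A ⊗ H → A ⊗ H. -/
/-!
Q-systems in the C*-tensor category `Hilb` of finite dimensional complex Hilbert
spaces.  Tensor products of Hilbert spaces carry the natural inner product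
`⟪a ⊗ b, c ⊗ d⟫ = ⟪a, c⟫ * ⟪b, d⟫`; since Mathlib does not provide this inner
product structure on `TensorProduct`, we encode it by a pairing
`p : E ⊗ F → E ⊗ F → ℂ` together with the (uniquely determining) requirements
that it is sesquilinear and takes the natural values on elementary tensors
(`IsTensorPairing`).  Hilbert space adjoints are encoded as data together with
their (uniquely determining) defining property w.r.t. these pairings
(`AdjointWRT`).  Identifications along the canonical associator and unitor
isomorphisms are written explicitly via `TensorProduct.assoc`, `lid`, `rid`.
-/

open scoped TensorProduct
open LinearMap

noncomputable section

/-- The natural inner product pairing on the tensor product of two complex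
inner product spaces: sesquilinear (conjugate-linear in the first variable,
linear in the second) and `⟪a ⊗ b, c ⊗ d⟫ = ⟪a, c⟫ * ⟪b, d⟫` on elementary
tensors.  These conditions determine the pairing uniquely. -/
def IsTensorPairing {E F : Type*} [NormedAddCommGroup E] [InnerProductSpace ℂ E]
    [NormedAddCommGroup F] [InnerProductSpace ℂ F]
    (p : E ⊗[ℂ] F → E ⊗[ℂ] F → ℂ) : Prop :=
  (∀ x x' y, p (x + x') y = p x y + p x' y) ∧
  (∀ x y y', p x (y + y') = p x y + p x y') ∧
  (∀ (c : ℂ) (x y), p (c • x) y = (starRingEnd ℂ) c * p x y) ∧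
  (∀ (c : ℂ) (x y), p x (c • y) = c * p x y) ∧
  (∀ (a : E) (b : F) (c : E) (d : F),
    p (a ⊗ₜ[ℂ] b) (c ⊗ₜ[ℂ] d) = (inner ℂ a c : ℂ) * (inner ℂ b d : ℂ))

/-- The inner product pairing of a complex inner product space. -/
def innerP (E : Type*) [NormedAddCommGroup E] [InnerProductSpace ℂ E] : E → E → ℂ :=
  fun x y => inner ℂ x y

/-- `g` is the (Hilbert space) adjoint of `f` with respect to the pairings
`pX` and `pY`:  `⟪f x, y⟫ = ⟪x, g y⟫` for all `x`, `y`. -/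
def AdjointWRT {X Y : Type*} [AddCommMonoid X] [Module ℂ X] [AddCommMonoid Y] [Module ℂ Y]
    (pX : X → X → ℂ) (pY : Y → Y → ℂ) (f : X →ₗ[ℂ] Y) (g : Y →ₗ[ℂ] X) : Prop :=
  ∀ x y, pY (f x) y = pX x (g y)

/-- The Q-system axioms for multiplication `m : A ⊗ A → A` and unit `i : ℂ → A`,
with `mS` playing the role of the adjoint `m*`:  associativity, unitality, the
Frobenius condition and separability (with canonical associators and unitors
written explicitly). -/
def QSystemEqs (A : Type*) [AddCommGroup A] [Module ℂ A]
    (m : A ⊗[ℂ] A →ₗ[ℂ] A) (i : ℂ →ₗ[ℂ] A) (mS : A →ₗ[ℂ] A ⊗[ℂ] A) : Prop :=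
  -- associativity: m ∘ (m ⊗ 1) = m ∘ (1 ⊗ m)
  m ∘ₗ rTensor A m =
      m ∘ₗ lTensor A m ∘ₗ (TensorProduct.assoc ℂ A A A).toLinearMap ∧
  -- unitality: m ∘ (i ⊗ 1) = 1 = m ∘ (1 ⊗ i)
  m ∘ₗ rTensor A i = (TensorProduct.lid ℂ A).toLinearMap ∧
  m ∘ₗ lTensor A i = (TensorProduct.rid ℂ A).toLinearMap ∧
  -- Frobenius: (m ⊗ 1) ∘ (1 ⊗ m*) = m* ∘ m = (1 ⊗ m) ∘ (m* ⊗ 1)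
  rTensor A m ∘ₗ (TensorProduct.assoc ℂ A A A).symm.toLinearMap ∘ₗ lTensor A mS =
      mS ∘ₗ m ∧
  lTensor A m ∘ₗ (TensorProduct.assoc ℂ A A A).toLinearMap ∘ₗ rTensor A mS =
      mS ∘ₗ m ∧
  -- separability: m ∘ m* = 1
  m ∘ₗ mS = LinearMap.id

/-- The defining conditions of a *quantum bi-element* `(H, Q1, Q2)` of a pair of
Q-systems `(A, mA, iA)`, `(B, mB, iB)` in Hilb, with `mAS, iAS, mBS, iBS, Q1S, Q2S`
playing the roles of the adjoints `mA*, iA*, mB*, iB*, Q1*, Q2*` (canonical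
associators and unitors written explicitly):
(1) `(1_A ⊗ Q1)∘Q1 = (mA* ⊗ 1_H)∘Q1`, `(Q2 ⊗ 1_B)∘Q2 = (1_H ⊗ mB*)∘Q2`,
    `(1_A ⊗ Q2)∘Q1 = (Q1 ⊗ 1_B)∘Q2`;
(2) `(iA* ⊗ 1_H)∘Q1 = 1_H = (1_H ⊗ iB*)∘Q2`;
(3) `Q1* = (iA* ⊗ 1_H)∘(mA ⊗ 1_H)∘(1_A ⊗ Q1)` and
    `Q2* = (1_H ⊗ iB*)∘(1_H ⊗ mB)∘(Q2 ⊗ 1_B)`. -/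
def QBEEqs (A B H : Type*) [AddCommGroup A] [Module ℂ A] [AddCommGroup B] [Module ℂ B]
    [AddCommGroup H] [Module ℂ H]
    (mA : A ⊗[ℂ] A →ₗ[ℂ] A) (iAS : A →ₗ[ℂ] ℂ) (mAS : A →ₗ[ℂ] A ⊗[ℂ] A)
    (mB : B ⊗[ℂ] B →ₗ[ℂ] B) (iBS : B →ₗ[ℂ] ℂ) (mBS : B →ₗ[ℂ] B ⊗[ℂ] B)
    (Q1 : H →ₗ[ℂ] A ⊗[ℂ] H) (Q2 : H →ₗ[ℂ] H ⊗[ℂ] B)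
    (Q1S : A ⊗[ℂ] H →ₗ[ℂ] H) (Q2S : H ⊗[ℂ] B →ₗ[ℂ] H) : Prop :=
  -- (1)
  lTensor A Q1 ∘ₗ Q1 =
      (TensorProduct.assoc ℂ A A H).toLinearMap ∘ₗ rTensor H mAS ∘ₗ Q1 ∧
  rTensor B Q2 ∘ₗ Q2 =
      (TensorProduct.assoc ℂ H B B).symm.toLinearMap ∘ₗ lTensor H mBS ∘ₗ Q2 ∧
  lTensor A Q2 ∘ₗ Q1 =
      (TensorProduct.assoc ℂ A H B).toLinearMap ∘ₗ rTensor B Q1 ∘ₗ Q2 ∧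
  -- (2)
  (TensorProduct.lid ℂ H).toLinearMap ∘ₗ rTensor H iAS ∘ₗ Q1 = LinearMap.id ∧
  (TensorProduct.rid ℂ H).toLinearMap ∘ₗ lTensor H iBS ∘ₗ Q2 = LinearMap.id ∧
  -- (3)
  Q1S = (TensorProduct.lid ℂ H).toLinearMap ∘ₗ rTensor H iAS ∘ₗ rTensor H mA ∘ₗ
      (TensorProduct.assoc ℂ A A H).symm.toLinearMap ∘ₗ lTensor A Q1 ∧
  Q2S = (TensorProduct.rid ℂ H).toLinearMap ∘ₗ lTensor H iBS ∘ₗ lTensor H mB ∘ₗ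
      (TensorProduct.assoc ℂ H B B).toLinearMap ∘ₗ rTensor B Q2

/-- Auxiliary: `a ⊗ m ↦ φ a • m`. -/
def smulLAux {A M : Type*} [AddCommGroup A] [Module ℂ A] [AddCommGroup M] [Module ℂ M]
    (φ : A →ₗ[ℂ] ℂ) : A ⊗[ℂ] M →ₗ[ℂ] M :=
  TensorProduct.lift (LinearMap.lsmul ℂ M ∘ₗ φ)

@[simp] lemma smulLAux_tmul {A M : Type*} [AddCommGroup A] [Module ℂ A] [AddCommGroup M]
    [Module ℂ M] (φ : A →ₗ[ℂ] ℂ) (a : A) (m : M) : smulLAux φ (a ⊗ₜ[ℂ] m) = φ a • m := rfl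

/-- Auxiliary: `m ⊗ a ↦ φ a • m`. -/
def smulRAux {A M : Type*} [AddCommGroup A] [Module ℂ A] [AddCommGroup M] [Module ℂ M]
    (φ : A →ₗ[ℂ] ℂ) : M ⊗[ℂ] A →ₗ[ℂ] M :=
  TensorProduct.lift (LinearMap.lsmul ℂ M ∘ₗ φ).flip

@[simp] lemma smulRAux_tmul {A M : Type*} [AddCommGroup A] [Module ℂ A] [AddCommGroup M]
    [Module ℂ M] (φ : A →ₗ[ℂ] ℂ) (m : M) (a : A) : smulRAux φ (m ⊗ₜ[ℂ] a) = φ a • m := rfl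

set_option maxHeartbeats 1000000 in
/-- For a quantum bi-element `(H, Q1, Q2)` of a pair of
Q-systems `(A, mA, iA)`, `(B, mB, iB)` in Hilb, the Frobenius identities hold
for `Q1`: `(mA ⊗ 1_H)∘(1_A ⊗ Q1) = Q1∘Q1* = (1_A ⊗ Q1*)∘(mA* ⊗ 1_H)`
as linear maps `A ⊗ H → A ⊗ H`. -/
theorem stmt1
    (A B H : Type*)
    [NormedAddCommGroup A] [InnerProductSpace ℂ A] [FiniteDimensional ℂ A]
    [NormedAddCommGroup B] [InnerProductSpace ℂ B] [FiniteDimensional ℂ B]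
    [NormedAddCommGroup H] [InnerProductSpace ℂ H] [FiniteDimensional ℂ H]
    (pAA : A ⊗[ℂ] A → A ⊗[ℂ] A → ℂ) (hpAA : IsTensorPairing pAA)
    (pBB : B ⊗[ℂ] B → B ⊗[ℂ] B → ℂ) (hpBB : IsTensorPairing pBB)
    (pAH : A ⊗[ℂ] H → A ⊗[ℂ] H → ℂ) (hpAH : IsTensorPairing pAH)
    (pHB : H ⊗[ℂ] B → H ⊗[ℂ] B → ℂ) (hpHB : IsTensorPairing pHB)
    (mA : A ⊗[ℂ] A →ₗ[ℂ] A) (iA : ℂ →ₗ[ℂ] A)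
    (mAS : A →ₗ[ℂ] A ⊗[ℂ] A) (iAS : A →ₗ[ℂ] ℂ)
    (hmAS : AdjointWRT pAA (innerP A) mA mAS)
    (hiAS : AdjointWRT (innerP ℂ) (innerP A) iA iAS)
    (hQA : QSystemEqs A mA iA mAS)
    (mB : B ⊗[ℂ] B →ₗ[ℂ] B) (iB : ℂ →ₗ[ℂ] B)
    (mBS : B →ₗ[ℂ] B ⊗[ℂ] B) (iBS : B →ₗ[ℂ] ℂ)
    (hmBS : AdjointWRT pBB (innerP B) mB mBS)
    (hiBS : AdjointWRT (innerP ℂ) (innerP B) iB iBS)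
    (hQB : QSystemEqs B mB iB mBS)
    (Q1 : H →ₗ[ℂ] A ⊗[ℂ] H) (Q1S : A ⊗[ℂ] H →ₗ[ℂ] H)
    (hQ1S : AdjointWRT (innerP H) pAH Q1 Q1S)
    (Q2 : H →ₗ[ℂ] H ⊗[ℂ] B) (Q2S : H ⊗[ℂ] B →ₗ[ℂ] H)
    (hQ2S : AdjointWRT (innerP H) pHB Q2 Q2S)
    (hQBE : QBEEqs A B H mA iAS mAS mB iBS mBS Q1 Q2 Q1S Q2S)
    :
    rTensor H mA ∘ₗ (TensorProduct.assoc ℂ A A H).symm.toLinearMap ∘ₗ lTensor A Q1 =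
        Q1 ∘ₗ Q1S ∧
    Q1 ∘ₗ Q1S =
        lTensor A Q1S ∘ₗ (TensorProduct.assoc ℂ A A H).toLinearMap ∘ₗ rTensor H mAS := by
  obtain ⟨hAassoc, hAul, hAur, hAf1, hAf2, hAsep⟩ := hQA
  obtain ⟨hm1, hm2, hm3, hu1, hu2, hq1s, hq2s⟩ := hQBE
  obtain ⟨pa1, pa2, pa3, pa4, pa5⟩ := hpAA
  clear pa1 pa3
  have paz : ∀ x, pAA x 0 = 0 := by
    intro x
    have h := pa4 0 x 0
    simpa using h
  -- dual left-unit law: (iAS ⊗ 1) ∘ mAS = lid⁻¹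
  have L1 : ∀ x : A, (TensorProduct.lid ℂ A) (rTensor A iAS (mAS x)) = x := by
    intro x
    apply ext_inner_left ℂ
    intro v
    have key : ∀ t : A ⊗[ℂ] A,
        (inner ℂ v ((TensorProduct.lid ℂ A) (rTensor A iAS t)) : ℂ)
          = pAA ((iA 1) ⊗ₜ[ℂ] v) t := by
      intro t
      induction t using TensorProduct.induction_on with
      | zero => simp [paz]
      | tmul c d =>
          have hc : (inner ℂ (iA 1) c : ℂ) = iAS c := by
            have h := hiAS 1 c
            simpa [innerP] using h
          simp [pa5, ← hc, inner_smul_right, mul_comm]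
      | add s t hs ht => simp [pa2, TensorProduct.tmul_add, inner_add_right, hs, ht]
    have h2 := hmAS ((iA 1) ⊗ₜ[ℂ] v) x
    have h3 : mA ((iA 1) ⊗ₜ[ℂ] v) = v := by
      have h := congrArg (fun f => f ((1 : ℂ) ⊗ₜ[ℂ] v)) hAul
      simpa using h
    rw [key (mAS x), ← h2]
    simp [innerP, h3]
  -- dual right-unit law: (1 ⊗ iAS) ∘ mAS = rid⁻¹
  have L2 : ∀ x : A, (TensorProduct.rid ℂ A) (lTensor A iAS (mAS x)) = x := by
    intro x
    apply ext_inner_left ℂ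
    intro v
    have key : ∀ t : A ⊗[ℂ] A,
        (inner ℂ v ((TensorProduct.rid ℂ A) (lTensor A iAS t)) : ℂ)
          = pAA (v ⊗ₜ[ℂ] (iA 1)) t := by
      intro t
      induction t using TensorProduct.induction_on with
      | zero => simp [paz]
      | tmul c d =>
          have hd : (inner ℂ (iA 1) d : ℂ) = iAS d := by
            have h := hiAS 1 d
            simpa [innerP] using h
          simp [pa5, ← hd, inner_smul_right, mul_comm]
      | add s t hs ht => simp [pa2, TensorProduct.tmul_add, inner_add_right, hs, ht]
    have h2 := hmAS (v ⊗ₜ[ℂ] (iA 1)) x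
    have h3 : mA (v ⊗ₜ[ℂ] (iA 1)) = v := by
      have h := congrArg (fun f => f (v ⊗ₜ[ℂ] (1 : ℂ))) hAur
      simpa using h
    rw [key (mAS x), ← h2]
    simp [innerP, h3]
  -- first Frobenius identity
  have main1 : rTensor H mA ∘ₗ (TensorProduct.assoc ℂ A A H).symm.toLinearMap ∘ₗ
      lTensor A Q1 = Q1 ∘ₗ Q1S := by
    apply TensorProduct.ext'
    intro a h
    set φ : A →ₗ[ℂ] ℂ := iAS ∘ₗ mA ∘ₗ TensorProduct.mk ℂ A A a with hφ
    have hφap : ∀ b : A, φ b = iAS (mA (a ⊗ₜ[ℂ] b)) := fun b => rfl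
    have hG : ∀ u : A ⊗[ℂ] H,
        (TensorProduct.lid ℂ H) (rTensor H iAS (rTensor H mA
          ((TensorProduct.assoc ℂ A A H).symm (a ⊗ₜ[ℂ] u)))) = smulLAux φ u := by
      intro u
      induction u using TensorProduct.induction_on with
      | zero => simp
      | tmul b k => simp [TensorProduct.assoc_symm_tmul, hφap]
      | add s t hs ht => simp [TensorProduct.tmul_add, hs, ht]
    have hK : ∀ b : A, smulLAux (M := A) φ (mAS b) = mA (a ⊗ₜ[ℂ] b) := by
      intro b
      have e1 : ∀ t : A ⊗[ℂ] A, smulLAux (M := A) φ t =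
          (TensorProduct.lid ℂ A) (rTensor A iAS (rTensor A mA
            ((TensorProduct.assoc ℂ A A A).symm (a ⊗ₜ[ℂ] t)))) := by
        intro t
        induction t using TensorProduct.induction_on with
        | zero => simp
        | tmul c d => simp [TensorProduct.assoc_symm_tmul, hφap]
        | add s t hs ht => simp [TensorProduct.tmul_add, hs, ht]
      have e2 := congrArg (fun f => f (a ⊗ₜ[ℂ] b)) hAf1
      simp only [comp_apply, LinearEquiv.coe_coe, lTensor_tmul] at e2
      rw [e1, e2, L1]
    have hQ1G : ∀ u : A ⊗[ℂ] H,
        Q1 (smulLAux (M := H) φ u) = smulLAux (M := A ⊗[ℂ] H) φ (lTensor A Q1 u) := by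
      intro u
      induction u using TensorProduct.induction_on with
      | zero => simp
      | tmul b k => simp
      | add s t hs ht => simp [hs, ht]
    have hHK : ∀ w : (A ⊗[ℂ] A) ⊗[ℂ] H,
        smulLAux (M := A ⊗[ℂ] H) φ ((TensorProduct.assoc ℂ A A H) w)
          = rTensor H (smulLAux (M := A) φ) w := by
      intro w
      induction w using TensorProduct.induction_on with
      | zero => simp
      | tmul t k =>
          induction t using TensorProduct.induction_on with
          | zero => simp
          | tmul c d => simp [TensorProduct.assoc_tmul, TensorProduct.smul_tmul']
          | add s t hs ht => simp [TensorProduct.add_tmul, hs, ht]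
      | add s t hs ht => simp [hs, ht]
    have hmod := congrArg (fun f => f h) hm1
    simp only [comp_apply, LinearEquiv.coe_coe] at hmod
    have hF : ∀ u : A ⊗[ℂ] H,
        rTensor H mA ((TensorProduct.assoc ℂ A A H).symm (a ⊗ₜ[ℂ] u))
          = rTensor H (mA ∘ₗ TensorProduct.mk ℂ A A a) u := by
      intro u
      induction u using TensorProduct.induction_on with
      | zero => simp
      | tmul b k => simp [TensorProduct.assoc_symm_tmul]
      | add s t hs ht => simp [TensorProduct.tmul_add, hs, ht]
    have hcomp : smulLAux (M := A) φ ∘ₗ mAS = mA ∘ₗ TensorProduct.mk ℂ A A a :=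
      LinearMap.ext hK
    simp only [comp_apply, LinearEquiv.coe_coe, lTensor_tmul]
    rw [hq1s]
    simp only [comp_apply, LinearEquiv.coe_coe, lTensor_tmul]
    rw [hG (Q1 h), hQ1G (Q1 h), hmod, hHK, ← comp_apply, ← rTensor_comp, hcomp,
      hF (Q1 h)]
  -- second Frobenius identity (in terms of the left-hand side of the first)
  have main2 : rTensor H mA ∘ₗ (TensorProduct.assoc ℂ A A H).symm.toLinearMap ∘ₗ
      lTensor A Q1 =
      lTensor A Q1S ∘ₗ (TensorProduct.assoc ℂ A A H).toLinearMap ∘ₗ rTensor H mAS := by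
    apply TensorProduct.ext'
    intro a h
    have hΘ : ∀ (d : A) (u : A ⊗[ℂ] H),
        ((TensorProduct.lid ℂ H).toLinearMap ∘ₗ rTensor H iAS ∘ₗ rTensor H mA ∘ₗ
          (TensorProduct.assoc ℂ A A H).symm.toLinearMap ∘ₗ
            (TensorProduct.mk ℂ A (A ⊗[ℂ] H)).flip u) d
          = (TensorProduct.lid ℂ H) (rTensor H iAS (rTensor H mA
              ((TensorProduct.assoc ℂ A A H).symm (d ⊗ₜ[ℂ] u)))) := by
      intro d u
      simp [TensorProduct.mk_apply]
    have hQ1Sap : ∀ d : A, Q1S (d ⊗ₜ[ℂ] h) =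
        ((TensorProduct.lid ℂ H).toLinearMap ∘ₗ rTensor H iAS ∘ₗ rTensor H mA ∘ₗ
          (TensorProduct.assoc ℂ A A H).symm.toLinearMap ∘ₗ
            (TensorProduct.mk ℂ A (A ⊗[ℂ] H)).flip (Q1 h)) d := by
      intro d
      rw [hq1s, hΘ]
      simp only [comp_apply, LinearEquiv.coe_coe, lTensor_tmul]
    have stepA : ∀ t : A ⊗[ℂ] A,
        lTensor A Q1S ((TensorProduct.assoc ℂ A A H) (t ⊗ₜ[ℂ] h))
          = lTensor A ((TensorProduct.lid ℂ H).toLinearMap ∘ₗ rTensor H iAS ∘ₗ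
              rTensor H mA ∘ₗ (TensorProduct.assoc ℂ A A H).symm.toLinearMap ∘ₗ
                (TensorProduct.mk ℂ A (A ⊗[ℂ] H)).flip (Q1 h)) t := by
      intro t
      induction t using TensorProduct.induction_on with
      | zero => simp
      | tmul c d => simp [TensorProduct.assoc_tmul, hQ1Sap d]
      | add s t hs ht => simp [TensorProduct.add_tmul, hs, ht]
    have hΛ : ∀ b : A,
        smulRAux (M := A) (iAS ∘ₗ mA ∘ₗ (TensorProduct.mk ℂ A A).flip b) (mAS a)
          = mA (a ⊗ₜ[ℂ] b) := by
      intro b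
      have e1 : ∀ t : A ⊗[ℂ] A,
          smulRAux (M := A) (iAS ∘ₗ mA ∘ₗ (TensorProduct.mk ℂ A A).flip b) t
            = (TensorProduct.rid ℂ A) (lTensor A iAS (lTensor A mA
                ((TensorProduct.assoc ℂ A A A) (t ⊗ₜ[ℂ] b)))) := by
        intro t
        induction t using TensorProduct.induction_on with
        | zero => simp
        | tmul c d => simp [TensorProduct.assoc_tmul, TensorProduct.mk_apply]
        | add s t hs ht => simp [TensorProduct.add_tmul, hs, ht]
      have e2 := congrArg (fun f => f (a ⊗ₜ[ℂ] b)) hAf2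
      simp only [comp_apply, LinearEquiv.coe_coe, rTensor_tmul] at e2
      rw [e1, e2, L2]
    have stepB : ∀ u : A ⊗[ℂ] H,
        lTensor A ((TensorProduct.lid ℂ H).toLinearMap ∘ₗ rTensor H iAS ∘ₗ
            rTensor H mA ∘ₗ (TensorProduct.assoc ℂ A A H).symm.toLinearMap ∘ₗ
              (TensorProduct.mk ℂ A (A ⊗[ℂ] H)).flip u) (mAS a)
          = rTensor H mA ((TensorProduct.assoc ℂ A A H).symm (a ⊗ₜ[ℂ] u)) := by
      intro u
      induction u using TensorProduct.induction_on with
      | zero =>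
          have h0 : (TensorProduct.mk ℂ A (A ⊗[ℂ] H)).flip (0 : A ⊗[ℂ] H) = 0 :=
            map_zero _
          rw [h0]
          simp only [comp_zero, lTensor_zero, LinearMap.zero_apply,
            TensorProduct.tmul_zero, map_zero]
      | tmul b k =>
          have hτ : (TensorProduct.lid ℂ H).toLinearMap ∘ₗ rTensor H iAS ∘ₗ
              rTensor H mA ∘ₗ (TensorProduct.assoc ℂ A A H).symm.toLinearMap ∘ₗ
                (TensorProduct.mk ℂ A (A ⊗[ℂ] H)).flip (b ⊗ₜ[ℂ] k)
              = (iAS ∘ₗ mA ∘ₗ (TensorProduct.mk ℂ A A).flip b).smulRight k := by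
            apply LinearMap.ext
            intro d
            simp [TensorProduct.mk_apply, TensorProduct.assoc_symm_tmul]
          have hsub : ∀ (ψ : A →ₗ[ℂ] ℂ) (t : A ⊗[ℂ] A),
              lTensor A (ψ.smulRight k) t = (smulRAux (M := A) ψ t) ⊗ₜ[ℂ] k := by
            intro ψ t
            induction t using TensorProduct.induction_on with
            | zero => simp
            | tmul c d => simp [TensorProduct.smul_tmul', TensorProduct.tmul_smul]
            | add s t hs ht => simp [TensorProduct.add_tmul, hs, ht]
          rw [hτ, hsub, hΛ b, TensorProduct.assoc_symm_tmul]
          simp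
      | add s t hs ht =>
          have hflip : (TensorProduct.mk ℂ A (A ⊗[ℂ] H)).flip (s + t)
              = (TensorProduct.mk ℂ A (A ⊗[ℂ] H)).flip s
                + (TensorProduct.mk ℂ A (A ⊗[ℂ] H)).flip t := by
            simp [map_add]
          rw [hflip]
          simp only [comp_add, lTensor_add, LinearMap.add_apply, hs, ht, TensorProduct.tmul_add,
            map_add]
    have lhs1 : rTensor H mA ((TensorProduct.assoc ℂ A A H).symm
        (lTensor A Q1 (a ⊗ₜ[ℂ] h))) = rTensor H mA
          ((TensorProduct.assoc ℂ A A H).symm (a ⊗ₜ[ℂ] Q1 h)) := by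
      simp
    simp only [comp_apply, LinearEquiv.coe_coe, lTensor_tmul, rTensor_tmul]
    rw [stepA (mAS a), stepB (Q1 h)]
  exact ⟨main1, by rw [← main1, main2]⟩
end
end

section
/- Let (A, m_A, i_A) and (B, m_B, i_B) be Q-systems in Hilb and let (H, Q1, Q2) be a quantum bi-element of the pair (A, B). Then the Frobenius identities hold for Q2: (1_H ⊗ m_B)∘(Q2 ⊗ 1_B) = Q2∘Q2* = (Q2* ⊗ 1_B)∘(1_H ⊗ m_B*) as linear maps H ⊗ B → H ⊗ B. -/
/-!
Q-systems in the C*-tensor category `Hilb` of finite dimensional complex Hilbert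
spaces.  Tensor products of Hilbert spaces carry the natural inner product
`⟪a ⊗ b, c ⊗ d⟫ = ⟪a, c⟫ * ⟪b, d⟫`; since Mathlib does not provide this inner
product structure on `TensorProduct`, we encode it by a pairing
`p : E ⊗ F → E ⊗ F → ℂ` together with the (uniquely determining) requirements
that it is sesquilinear and takes the natural values on elementary tensors
(`IsTensorPairing`).  Hilbert space adjoints are encoded as data together with
their (uniquely determining) defining property w.r.t. these pairings
(`AdjointWRT`).  Identifications along the canonical associator and unitor
isomorphisms are written explicitly via `TensorProduct.assoc`, `lid`, `rid`.
-/

open scoped TensorProduct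
open LinearMap

noncomputable section

set_option maxHeartbeats 1000000 in
/-- For a quantum bi-element `(H, Q1, Q2)` of a pair of
Q-systems `(A, mA, iA)`, `(B, mB, iB)` in Hilb, the Frobenius identities hold
for `Q2`: `(1_H ⊗ mB)∘(Q2 ⊗ 1_B) = Q2∘Q2* = (Q2* ⊗ 1_B)∘(1_H ⊗ mB*)`
as linear maps `H ⊗ B → H ⊗ B`. -/
theorem stmt2
    (A B H : Type*)
    [NormedAddCommGroup A] [InnerProductSpace ℂ A] [FiniteDimensional ℂ A]
    [NormedAddCommGroup B] [InnerProductSpace ℂ B] [FiniteDimensional ℂ B]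
    [NormedAddCommGroup H] [InnerProductSpace ℂ H] [FiniteDimensional ℂ H]
    (pAA : A ⊗[ℂ] A → A ⊗[ℂ] A → ℂ) (hpAA : IsTensorPairing pAA)
    (pBB : B ⊗[ℂ] B → B ⊗[ℂ] B → ℂ) (hpBB : IsTensorPairing pBB)
    (pAH : A ⊗[ℂ] H → A ⊗[ℂ] H → ℂ) (hpAH : IsTensorPairing pAH)
    (pHB : H ⊗[ℂ] B → H ⊗[ℂ] B → ℂ) (hpHB : IsTensorPairing pHB)
    (mA : A ⊗[ℂ] A →ₗ[ℂ] A) (iA : ℂ →ₗ[ℂ] A)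
    (mAS : A →ₗ[ℂ] A ⊗[ℂ] A) (iAS : A →ₗ[ℂ] ℂ)
    (hmAS : AdjointWRT pAA (innerP A) mA mAS)
    (hiAS : AdjointWRT (innerP ℂ) (innerP A) iA iAS)
    (hQA : QSystemEqs A mA iA mAS)
    (mB : B ⊗[ℂ] B →ₗ[ℂ] B) (iB : ℂ →ₗ[ℂ] B)
    (mBS : B →ₗ[ℂ] B ⊗[ℂ] B) (iBS : B →ₗ[ℂ] ℂ)
    (hmBS : AdjointWRT pBB (innerP B) mB mBS)
    (hiBS : AdjointWRT (innerP ℂ) (innerP B) iB iBS)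
    (hQB : QSystemEqs B mB iB mBS)
    (Q1 : H →ₗ[ℂ] A ⊗[ℂ] H) (Q1S : A ⊗[ℂ] H →ₗ[ℂ] H)
    (hQ1S : AdjointWRT (innerP H) pAH Q1 Q1S)
    (Q2 : H →ₗ[ℂ] H ⊗[ℂ] B) (Q2S : H ⊗[ℂ] B →ₗ[ℂ] H)
    (hQ2S : AdjointWRT (innerP H) pHB Q2 Q2S)
    (hQBE : QBEEqs A B H mA iAS mAS mB iBS mBS Q1 Q2 Q1S Q2S)
    :
    lTensor H mB ∘ₗ (TensorProduct.assoc ℂ H B B).toLinearMap ∘ₗ rTensor B Q2 =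
        Q2 ∘ₗ Q2S ∧
    Q2 ∘ₗ Q2S =
        rTensor B Q2S ∘ₗ (TensorProduct.assoc ℂ H B B).symm.toLinearMap ∘ₗ lTensor H mBS := by

  obtain ⟨pAdd1, pAdd2, pSmul1, pSmul2, pTmul⟩ := hpBB
  obtain ⟨_, hunitl, hunitr, hfrob1, hfrob2, _⟩ := hQB
  obtain ⟨_, hE1b, _, _, _, _, hQ2Sdef⟩ := hQBE
  -- counit identity 1: rid ∘ (1 ⊗ iBS) ∘ mBS = id
  have counit1 : (TensorProduct.rid ℂ B).toLinearMap ∘ₗ lTensor B iBS ∘ₗ mBS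
      = LinearMap.id := by
    apply LinearMap.ext; intro b
    apply ext_inner_left ℂ; intro c
    have aux : ∀ t : B ⊗[ℂ] B,
        (inner ℂ c ((TensorProduct.rid ℂ B) ((lTensor B iBS) t)) : ℂ)
          = pBB (c ⊗ₜ[ℂ] iB 1) t := by
      intro t
      induction t using TensorProduct.induction_on with
      | zero =>
          have h0 : pBB (c ⊗ₜ[ℂ] iB 1) (0 : B ⊗[ℂ] B) = 0 := by
            have := pSmul2 0 (c ⊗ₜ[ℂ] iB 1) 0
            simpa using this
          simp [h0]
      | tmul x y =>
          have h1 : (inner ℂ (iB 1) y : ℂ) = iBS y := by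
            have := hiBS 1 y
            simp [innerP, RCLike.inner_apply] at this ⊢
            simpa using this
          simp [TensorProduct.rid_tmul, lTensor_tmul, inner_smul_right,
            pTmul, h1]
          ring
      | add u v hu hv =>
          simp [map_add, inner_add_right, pAdd2, hu, hv]
    have step := aux (mBS b)
    have step2 : pBB (c ⊗ₜ[ℂ] iB 1) (mBS b) = (inner ℂ c b : ℂ) := by
      have hm := (hmBS (c ⊗ₜ[ℂ] iB 1) b).symm
      have hcb : mB (c ⊗ₜ[ℂ] iB 1) = c := by
        have := LinearMap.congr_fun hunitr (c ⊗ₜ[ℂ] (1 : ℂ))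
        simpa using this
      simpa [innerP, hcb] using hm
    simpa [step2] using step
  -- counit identity 2: lid ∘ (iBS ⊗ 1) ∘ mBS = id
  have counit2 : (TensorProduct.lid ℂ B).toLinearMap ∘ₗ rTensor B iBS ∘ₗ mBS
      = LinearMap.id := by
    apply LinearMap.ext; intro b
    apply ext_inner_left ℂ; intro c
    have aux : ∀ t : B ⊗[ℂ] B,
        (inner ℂ c ((TensorProduct.lid ℂ B) ((rTensor B iBS) t)) : ℂ)
          = pBB (iB 1 ⊗ₜ[ℂ] c) t := by
      intro t
      induction t using TensorProduct.induction_on with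
      | zero =>
          have h0 : pBB (iB 1 ⊗ₜ[ℂ] c) (0 : B ⊗[ℂ] B) = 0 := by
            have := pSmul2 0 (iB 1 ⊗ₜ[ℂ] c) 0
            simpa using this
          simp [h0]
      | tmul x y =>
          have h1 : (inner ℂ (iB 1) x : ℂ) = iBS x := by
            have := hiBS 1 x
            simp [innerP, RCLike.inner_apply] at this ⊢
            simpa using this
          simp [TensorProduct.lid_tmul, rTensor_tmul, inner_smul_right,
            pTmul, h1]
      | add u v hu hv =>
          simp [map_add, inner_add_right, pAdd2, hu, hv]
    have step := aux (mBS b)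
    have step2 : pBB (iB 1 ⊗ₜ[ℂ] c) (mBS b) = (inner ℂ c b : ℂ) := by
      have hm := (hmBS (iB 1 ⊗ₜ[ℂ] c) b).symm
      have hcb : mB (iB 1 ⊗ₜ[ℂ] c) = c := by
        have := LinearMap.congr_fun hunitl ((1 : ℂ) ⊗ₜ[ℂ] c)
        simpa using this
      simpa [innerP, hcb] using hm
    simpa [step2] using step
  -- key identity 1 on B
  have bkey : (TensorProduct.rid ℂ B).toLinearMap ∘ₗ lTensor B iBS ∘ₗ lTensor B mB ∘ₗ
      (TensorProduct.assoc ℂ B B B).toLinearMap ∘ₗ rTensor B mBS = mB := by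
    rw [hfrob2]
    apply LinearMap.ext; intro x
    have := LinearMap.congr_fun counit1 (mB x)
    simpa using this
  -- key identity 2 on B
  have bkey2 : (TensorProduct.lid ℂ B).toLinearMap ∘ₗ rTensor B iBS ∘ₗ rTensor B mB ∘ₗ
      (TensorProduct.assoc ℂ B B B).symm.toLinearMap ∘ₗ lTensor B mBS = mB := by
    rw [hfrob1]
    apply LinearMap.ext; intro x
    have := LinearMap.congr_fun counit2 (mB x)
    simpa using this
  -- first Frobenius identity for Q2
  have g1 : lTensor H mB ∘ₗ (TensorProduct.assoc ℂ H B B).toLinearMap ∘ₗ rTensor B Q2 =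
      Q2 ∘ₗ Q2S := by
    apply TensorProduct.ext'; intro h b
    set Φ : (H ⊗[ℂ] B) ⊗[ℂ] B →ₗ[ℂ] H ⊗[ℂ] B :=
      (TensorProduct.rid ℂ (H ⊗[ℂ] B)).toLinearMap ∘ₗ
        lTensor (H ⊗[ℂ] B) (iBS ∘ₗ mB ∘ₗ (TensorProduct.mk ℂ B B).flip b) with hΦ
    have claimA : ∀ T : H ⊗[ℂ] B,
        Q2 ((TensorProduct.rid ℂ H) ((lTensor H iBS) ((lTensor H mB)
          ((TensorProduct.assoc ℂ H B B) (T ⊗ₜ[ℂ] b)))))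
        = Φ ((rTensor B Q2) T) := by
      intro T
      induction T using TensorProduct.induction_on with
      | zero => simp [hΦ]
      | tmul u c => simp [hΦ, TensorProduct.assoc_tmul, lTensor_tmul, rTensor_tmul,
          TensorProduct.rid_tmul, map_smul, TensorProduct.mk_apply]
      | add u v hu hv => simp [TensorProduct.add_tmul, map_add, hu, hv]
    have claimB : ∀ T : H ⊗[ℂ] B,
        Φ ((TensorProduct.assoc ℂ H B B).symm ((lTensor H mBS) T))
        = (lTensor H mB) ((TensorProduct.assoc ℂ H B B) (T ⊗ₜ[ℂ] b)) := by
      intro T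
      induction T using TensorProduct.induction_on with
      | zero => simp
      | tmul u c =>
          have claimB' : ∀ s : B ⊗[ℂ] B,
              Φ ((TensorProduct.assoc ℂ H B B).symm (u ⊗ₜ[ℂ] s))
              = u ⊗ₜ[ℂ] ((TensorProduct.rid ℂ B) ((lTensor B iBS) ((lTensor B mB)
                  ((TensorProduct.assoc ℂ B B B) (s ⊗ₜ[ℂ] b))))) := by
            intro s
            induction s using TensorProduct.induction_on with
            | zero => simp
            | tmul c1 c2 => simp [hΦ, TensorProduct.assoc_symm_tmul,
                TensorProduct.assoc_tmul, lTensor_tmul, TensorProduct.rid_tmul,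
                TensorProduct.mk_apply, TensorProduct.tmul_smul]
            | add s1 s2 h1 h2 => simp [TensorProduct.tmul_add, TensorProduct.add_tmul,
                map_add, h1, h2]
          have hb := LinearMap.congr_fun bkey (c ⊗ₜ[ℂ] b)
          simp only [LinearMap.comp_apply, rTensor_tmul,
            LinearEquiv.coe_coe] at hb
          simp only [lTensor_tmul, claimB' (mBS c), hb,
            TensorProduct.assoc_tmul]
      | add u v hu hv => simp [map_add, TensorProduct.add_tmul, hu, hv]
    have e1 := LinearMap.congr_fun hE1b h
    simp only [LinearMap.comp_apply, LinearEquiv.coe_coe] at e1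
    calc (lTensor H mB ∘ₗ (TensorProduct.assoc ℂ H B B).toLinearMap ∘ₗ rTensor B Q2)
          (h ⊗ₜ[ℂ] b)
        = (lTensor H mB) ((TensorProduct.assoc ℂ H B B) ((Q2 h) ⊗ₜ[ℂ] b)) := by
          simp [rTensor_tmul]
      _ = Φ ((TensorProduct.assoc ℂ H B B).symm ((lTensor H mBS) (Q2 h))) :=
          (claimB (Q2 h)).symm
      _ = Φ ((rTensor B Q2) (Q2 h)) := by rw [e1]
      _ = Q2 ((TensorProduct.rid ℂ H) ((lTensor H iBS) ((lTensor H mB)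
            ((TensorProduct.assoc ℂ H B B) ((Q2 h) ⊗ₜ[ℂ] b))))) := (claimA (Q2 h)).symm
      _ = (Q2 ∘ₗ Q2S) (h ⊗ₜ[ℂ] b) := by
          rw [hQ2Sdef]; simp [rTensor_tmul]
  refine ⟨g1, ?_⟩
  rw [← g1]
  apply TensorProduct.ext'; intro h b
  have claimC1 : ∀ s : B ⊗[ℂ] B,
      (rTensor B Q2S) ((TensorProduct.assoc ℂ H B B).symm (h ⊗ₜ[ℂ] s))
      = rTensor B (Q2S ∘ₗ TensorProduct.mk ℂ H B h) s := by
    intro s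
    induction s using TensorProduct.induction_on with
    | zero => simp
    | tmul b1 b2 => simp [TensorProduct.assoc_symm_tmul, rTensor_tmul,
        TensorProduct.mk_apply]
    | add s1 s2 h1 h2 => simp [TensorProduct.tmul_add, map_add, h1, h2]
  set g : H ⊗[ℂ] B → (B →ₗ[ℂ] H) := fun T =>
    (TensorProduct.rid ℂ H).toLinearMap ∘ₗ lTensor H iBS ∘ₗ lTensor H mB ∘ₗ
      (TensorProduct.assoc ℂ H B B).toLinearMap ∘ₗ TensorProduct.mk ℂ (H ⊗[ℂ] B) B T
    with hgdef
  have hg : Q2S ∘ₗ TensorProduct.mk ℂ H B h = g (Q2 h) := by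
    apply LinearMap.ext; intro b1
    rw [hQ2Sdef]
    simp [hgdef, TensorProduct.mk_apply, rTensor_tmul]
  have claimC2 : ∀ T : H ⊗[ℂ] B,
      rTensor B (g T) (mBS b)
      = (lTensor H mB) ((TensorProduct.assoc ℂ H B B) (T ⊗ₜ[ℂ] b)) := by
    intro T
    induction T using TensorProduct.induction_on with
    | zero =>
        have : g 0 = 0 := by
          apply LinearMap.ext; intro b1; simp [hgdef]
        simp [this]
    | tmul u c =>
        have claimC4 : ∀ s : B ⊗[ℂ] B,
            rTensor B (g (u ⊗ₜ[ℂ] c)) s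
            = u ⊗ₜ[ℂ] ((TensorProduct.lid ℂ B) ((rTensor B iBS) ((rTensor B mB)
                ((TensorProduct.assoc ℂ B B B).symm (c ⊗ₜ[ℂ] s))))) := by
          intro s
          induction s using TensorProduct.induction_on with
          | zero => simp
          | tmul b1 b2 => simp [hgdef, TensorProduct.mk_apply, rTensor_tmul,
              TensorProduct.assoc_tmul, TensorProduct.assoc_symm_tmul,
              lTensor_tmul, TensorProduct.rid_tmul, TensorProduct.lid_tmul,
              TensorProduct.smul_tmul, TensorProduct.tmul_smul]
          | add s1 s2 h1 h2 => simp [TensorProduct.tmul_add, map_add, h1, h2]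
        have hb := LinearMap.congr_fun bkey2 (c ⊗ₜ[ℂ] b)
        simp only [LinearMap.comp_apply, lTensor_tmul, LinearEquiv.coe_coe] at hb
        simp only [claimC4 (mBS b), hb, TensorProduct.assoc_tmul, lTensor_tmul]
    | add u v hu hv =>
        have : g (u + v) = g u + g v := by
          apply LinearMap.ext; intro b1
          simp [hgdef, TensorProduct.mk_apply, TensorProduct.add_tmul]
        simp only [this, LinearMap.rTensor_add, LinearMap.add_apply, hu, hv,
          TensorProduct.add_tmul, map_add]
  calc (lTensor H mB ∘ₗ (TensorProduct.assoc ℂ H B B).toLinearMap ∘ₗ rTensor B Q2)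
        (h ⊗ₜ[ℂ] b)
      = (lTensor H mB) ((TensorProduct.assoc ℂ H B B) ((Q2 h) ⊗ₜ[ℂ] b)) := by
        simp [rTensor_tmul]
    _ = rTensor B (g (Q2 h)) (mBS b) := (claimC2 (Q2 h)).symm
    _ = rTensor B (Q2S ∘ₗ TensorProduct.mk ℂ H B h) (mBS b) := by rw [hg]
    _ = (rTensor B Q2S) ((TensorProduct.assoc ℂ H B B).symm (h ⊗ₜ[ℂ] mBS b)) :=
        (claimC1 (mBS b)).symm
    _ = (rTensor B Q2S ∘ₗ (TensorProduct.assoc ℂ H B B).symm.toLinearMap ∘ₗ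
          lTensor H mBS) (h ⊗ₜ[ℂ] b) := by
        simp [lTensor_tmul]
end
end

section
/- Let (A, m_A, i_A) and (B, m_B, i_B) be Q-systems in Hilb and let (H, Q1, Q2) be a quantum bi-element of the pair (A, B). Then Q1 and Q2 are isometries, i.e. Q1*∘Q1 = 1_H and Q2*∘Q2 = 1_H. -/
/-!
Q-systems in the C*-tensor category `Hilb` of finite dimensional complex Hilbert
spaces.  Tensor products of Hilbert spaces carry the natural inner product
`⟪a ⊗ b, c ⊗ d⟫ = ⟪a, c⟫ * ⟪b, d⟫`; since Mathlib does not provide this inner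
product structure on `TensorProduct`, we encode it by a pairing
`p : E ⊗ F → E ⊗ F → ℂ` together with the (uniquely determining) requirements
that it is sesquilinear and takes the natural values on elementary tensors
(`IsTensorPairing`).  Hilbert space adjoints are encoded as data together with
their (uniquely determining) defining property w.r.t. these pairings
(`AdjointWRT`).  Identifications along the canonical associator and unitor
isomorphisms are written explicitly via `TensorProduct.assoc`, `lid`, `rid`.
-/

open scoped TensorProduct
open LinearMap

noncomputable section

/-- For a quantum bi-element `(H, Q1, Q2)` of a pair of
Q-systems in Hilb, `Q1` and `Q2` are isometries: `Q1*∘Q1 = 1_H` and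
`Q2*∘Q2 = 1_H`. -/
theorem stmt3
    (A B H : Type*)
    [NormedAddCommGroup A] [InnerProductSpace ℂ A] [FiniteDimensional ℂ A]
    [NormedAddCommGroup B] [InnerProductSpace ℂ B] [FiniteDimensional ℂ B]
    [NormedAddCommGroup H] [InnerProductSpace ℂ H] [FiniteDimensional ℂ H]
    (pAA : A ⊗[ℂ] A → A ⊗[ℂ] A → ℂ) (hpAA : IsTensorPairing pAA)
    (pBB : B ⊗[ℂ] B → B ⊗[ℂ] B → ℂ) (hpBB : IsTensorPairing pBB)
    (pAH : A ⊗[ℂ] H → A ⊗[ℂ] H → ℂ) (hpAH : IsTensorPairing pAH)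
    (pHB : H ⊗[ℂ] B → H ⊗[ℂ] B → ℂ) (hpHB : IsTensorPairing pHB)
    (mA : A ⊗[ℂ] A →ₗ[ℂ] A) (iA : ℂ →ₗ[ℂ] A)
    (mAS : A →ₗ[ℂ] A ⊗[ℂ] A) (iAS : A →ₗ[ℂ] ℂ)
    (hmAS : AdjointWRT pAA (innerP A) mA mAS)
    (hiAS : AdjointWRT (innerP ℂ) (innerP A) iA iAS)
    (hQA : QSystemEqs A mA iA mAS)
    (mB : B ⊗[ℂ] B →ₗ[ℂ] B) (iB : ℂ →ₗ[ℂ] B)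
    (mBS : B →ₗ[ℂ] B ⊗[ℂ] B) (iBS : B →ₗ[ℂ] ℂ)
    (hmBS : AdjointWRT pBB (innerP B) mB mBS)
    (hiBS : AdjointWRT (innerP ℂ) (innerP B) iB iBS)
    (hQB : QSystemEqs B mB iB mBS)
    (Q1 : H →ₗ[ℂ] A ⊗[ℂ] H) (Q1S : A ⊗[ℂ] H →ₗ[ℂ] H)
    (hQ1S : AdjointWRT (innerP H) pAH Q1 Q1S)
    (Q2 : H →ₗ[ℂ] H ⊗[ℂ] B) (Q2S : H ⊗[ℂ] B →ₗ[ℂ] H)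
    (hQ2S : AdjointWRT (innerP H) pHB Q2 Q2S)
    (hQBE : QBEEqs A B H mA iAS mAS mB iBS mBS Q1 Q2 Q1S Q2S)
    :
    Q1S ∘ₗ Q1 = LinearMap.id ∧ Q2S ∘ₗ Q2 = LinearMap.id := by
  obtain ⟨h1, h2, h3, h4, h5, hq1s, hq2s⟩ := hQBE
  obtain ⟨_, _, _, _, _, sepA⟩ := hQA
  obtain ⟨_, _, _, _, _, sepB⟩ := hQB
  constructor
  · ext x
    have e1 := LinearMap.ext_iff.mp h1 x
    have e2 := LinearMap.ext_iff.mp h4 x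
    simp only [LinearMap.comp_apply] at e1 e2
    simp only [hq1s, LinearMap.comp_apply, LinearMap.id_apply, e1,
      LinearEquiv.coe_coe, LinearEquiv.symm_apply_apply] at *
    rw [show rTensor H mA (rTensor H mAS (Q1 x)) = rTensor H (mA ∘ₗ mAS) (Q1 x) by
      rw [rTensor_comp]; rfl, sepA, rTensor_id, LinearMap.id_apply, e2]
  · ext x
    have e1 := LinearMap.ext_iff.mp h2 x
    have e2 := LinearMap.ext_iff.mp h5 x
    simp only [LinearMap.comp_apply] at e1 e2
    simp only [hq2s, LinearMap.comp_apply, LinearMap.id_apply, e1,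
      LinearEquiv.coe_coe, LinearEquiv.apply_symm_apply] at *
    rw [show lTensor H mB (lTensor H mBS (Q2 x)) = lTensor H (mB ∘ₗ mBS) (Q2 x) by
      rw [lTensor_comp]; rfl, sepB, lTensor_id, LinearMap.id_apply, e2]
end
end

section
/- Let (A, m_A, i_A) and (B, m_B, i_B) be Q-systems in Hilb and let (H, Q1, Q2) be a quantum bi-element of the pair (A, B). Then Q1∘Q2* = (1_A ⊗ Q2*)∘(Q1 ⊗ 1_B) as linear maps H ⊗ B → A ⊗ H. -/
/-!
Q-systems in the C*-tensor category `Hilb` of finite dimensional complex Hilbert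
spaces.  Tensor products of Hilbert spaces carry the natural inner product
`⟪a ⊗ b, c ⊗ d⟫ = ⟪a, c⟫ * ⟪b, d⟫`; since Mathlib does not provide this inner
product structure on `TensorProduct`, we encode it by a pairing
`p : E ⊗ F → E ⊗ F → ℂ` together with the (uniquely determining) requirements
that it is sesquilinear and takes the natural values on elementary tensors
(`IsTensorPairing`).  Hilbert space adjoints are encoded as data together with
their (uniquely determining) defining property w.r.t. these pairings
(`AdjointWRT`).  Identifications along the canonical associator and unitor
isomorphisms are written explicitly via `TensorProduct.assoc`, `lid`, `rid`.
-/

open scoped TensorProduct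
open LinearMap

noncomputable section

section Aux

variable {B H : Type*} [AddCommGroup B] [Module ℂ B] [AddCommGroup H] [Module ℂ H]

/-- Auxiliary map `(H ⊗ B) ⊗ B → H` built from `mB` and `iBS`. -/
def Tmap (mB : B ⊗[ℂ] B →ₗ[ℂ] B) (iBS : B →ₗ[ℂ] ℂ) :
    (H ⊗[ℂ] B) ⊗[ℂ] B →ₗ[ℂ] H :=
  (TensorProduct.rid ℂ H).toLinearMap ∘ₗ lTensor H iBS ∘ₗ lTensor H mB ∘ₗ
    (TensorProduct.assoc ℂ H B B).toLinearMap

@[simp] lemma Tmap_tmul (mB : B ⊗[ℂ] B →ₗ[ℂ] B) (iBS : B →ₗ[ℂ] ℂ)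
    (h : H) (b b' : B) :
    Tmap mB iBS ((h ⊗ₜ[ℂ] b) ⊗ₜ[ℂ] b') = iBS (mB (b ⊗ₜ[ℂ] b')) • h := by
  simp [Tmap]

end Aux

/-- For a quantum bi-element `(H, Q1, Q2)` of a pair of
Q-systems in Hilb, `Q1∘Q2* = (1_A ⊗ Q2*)∘(Q1 ⊗ 1_B)` as linear maps
`H ⊗ B → A ⊗ H`. -/
theorem stmt4
    (A B H : Type*)
    [NormedAddCommGroup A] [InnerProductSpace ℂ A] [FiniteDimensional ℂ A]
    [NormedAddCommGroup B] [InnerProductSpace ℂ B] [FiniteDimensional ℂ B]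
    [NormedAddCommGroup H] [InnerProductSpace ℂ H] [FiniteDimensional ℂ H]
    (pAA : A ⊗[ℂ] A → A ⊗[ℂ] A → ℂ) (hpAA : IsTensorPairing pAA)
    (pBB : B ⊗[ℂ] B → B ⊗[ℂ] B → ℂ) (hpBB : IsTensorPairing pBB)
    (pAH : A ⊗[ℂ] H → A ⊗[ℂ] H → ℂ) (hpAH : IsTensorPairing pAH)
    (pHB : H ⊗[ℂ] B → H ⊗[ℂ] B → ℂ) (hpHB : IsTensorPairing pHB)
    (mA : A ⊗[ℂ] A →ₗ[ℂ] A) (iA : ℂ →ₗ[ℂ] A)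
    (mAS : A →ₗ[ℂ] A ⊗[ℂ] A) (iAS : A →ₗ[ℂ] ℂ)
    (hmAS : AdjointWRT pAA (innerP A) mA mAS)
    (hiAS : AdjointWRT (innerP ℂ) (innerP A) iA iAS)
    (hQA : QSystemEqs A mA iA mAS)
    (mB : B ⊗[ℂ] B →ₗ[ℂ] B) (iB : ℂ →ₗ[ℂ] B)
    (mBS : B →ₗ[ℂ] B ⊗[ℂ] B) (iBS : B →ₗ[ℂ] ℂ)
    (hmBS : AdjointWRT pBB (innerP B) mB mBS)
    (hiBS : AdjointWRT (innerP ℂ) (innerP B) iB iBS)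
    (hQB : QSystemEqs B mB iB mBS)
    (Q1 : H →ₗ[ℂ] A ⊗[ℂ] H) (Q1S : A ⊗[ℂ] H →ₗ[ℂ] H)
    (hQ1S : AdjointWRT (innerP H) pAH Q1 Q1S)
    (Q2 : H →ₗ[ℂ] H ⊗[ℂ] B) (Q2S : H ⊗[ℂ] B →ₗ[ℂ] H)
    (hQ2S : AdjointWRT (innerP H) pHB Q2 Q2S)
    (hQBE : QBEEqs A B H mA iAS mAS mB iBS mBS Q1 Q2 Q1S Q2S)
    :
    Q1 ∘ₗ Q2S =
        lTensor A Q2S ∘ₗ (TensorProduct.assoc ℂ A H B).toLinearMap ∘ₗ rTensor B Q1 := by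
  obtain ⟨-, -, e1c, -, -, -, e3b⟩ := hQBE
  have hQ2Sc : Q2S = Tmap mB iBS ∘ₗ rTensor B Q2 := by
    rw [e3b]; rfl
  have hQ2Spt : ∀ (h : H) (b : B),
      Q2S (h ⊗ₜ[ℂ] b) = Tmap mB iBS ((Q2 h) ⊗ₜ[ℂ] b) := by
    intro h b; rw [hQ2Sc]; simp
  have e1cpt : ∀ h : H, lTensor A Q2 (Q1 h) =
      (TensorProduct.assoc ℂ A H B) (rTensor B Q1 (Q2 h)) := by
    intro h
    have := LinearMap.congr_fun e1c h
    simpa using this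
  have P3 : ∀ (x : A ⊗[ℂ] H) (b b' : B),
      lTensor A (Tmap mB iBS) ((TensorProduct.assoc ℂ A (H ⊗[ℂ] B) B)
        (((TensorProduct.assoc ℂ A H B) (x ⊗ₜ[ℂ] b)) ⊗ₜ[ℂ] b')) =
      iBS (mB (b ⊗ₜ[ℂ] b')) • x := by
    intro x b b'
    induction x using TensorProduct.induction_on with
    | zero => simp
    | tmul a h => simp [TensorProduct.tmul_smul]
    | add x y hx hy => simp [TensorProduct.add_tmul, hx, hy, smul_add]
  have P2 : ∀ (y : H ⊗[ℂ] B) (b : B),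
      lTensor A (Tmap mB iBS) ((TensorProduct.assoc ℂ A (H ⊗[ℂ] B) B)
        (((TensorProduct.assoc ℂ A H B) (rTensor B Q1 y)) ⊗ₜ[ℂ] b)) =
      Q1 (Tmap mB iBS (y ⊗ₜ[ℂ] b)) := by
    intro y b
    induction y using TensorProduct.induction_on with
    | zero => simp
    | tmul h' b' => rw [rTensor_tmul, P3 (Q1 h') b' b, Tmap_tmul, map_smul]
    | add y z hy hz => simp [TensorProduct.add_tmul, hy, hz]
  have P1 : ∀ (x : A ⊗[ℂ] H) (b : B),
      lTensor A Q2S ((TensorProduct.assoc ℂ A H B) (x ⊗ₜ[ℂ] b)) =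
      lTensor A (Tmap mB iBS) ((TensorProduct.assoc ℂ A (H ⊗[ℂ] B) B)
        ((lTensor A Q2 x) ⊗ₜ[ℂ] b)) := by
    intro x b
    induction x using TensorProduct.induction_on with
    | zero => simp
    | tmul a h => simp [hQ2Spt]
    | add x y hx hy => simp [TensorProduct.add_tmul, hx, hy]
  apply TensorProduct.ext'
  intro h b
  simp only [LinearMap.comp_apply, rTensor_tmul, LinearEquiv.coe_coe]
  rw [P1, e1cpt, P2, hQ2Spt]
end
end

section
/- Let (A, m_A, i_A) and (B, m_B, i_B) be Q-systems in Hilb, let (H, Q1, Q2) be a quantum bi-element of the pair (A, B), and set P := Q1∘Q2* : H ⊗ B → A ⊗ H. Then P satisfies the comultiplicativity axiom of a quantum function from B to A: (m_A* ⊗ 1_H)∘P = (1_A ⊗ P)∘(P ⊗ 1_B)∘(1_H ⊗ m_B*) as linear maps H ⊗ B → A ⊗ A ⊗ H. -/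
/-!
Q-systems in the C*-tensor category `Hilb` of finite dimensional complex Hilbert
spaces.  Tensor products of Hilbert spaces carry the natural inner product
`⟪a ⊗ b, c ⊗ d⟫ = ⟪a, c⟫ * ⟪b, d⟫`; since Mathlib does not provide this inner
product structure on `TensorProduct`, we encode it by a pairing
`p : E ⊗ F → E ⊗ F → ℂ` together with the (uniquely determining) requirements
that it is sesquilinear and takes the natural values on elementary tensors
(`IsTensorPairing`).  Hilbert space adjoints are encoded as data together with
their (uniquely determining) defining property w.r.t. these pairings
(`AdjointWRT`).  Identifications along the canonical associator and unitor
isomorphisms are written explicitly via `TensorProduct.assoc`, `lid`, `rid`.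
-/

open scoped TensorProduct
open LinearMap

noncomputable section

section Helpers
set_option maxRecDepth 8000
variable {X X' Y Z P P' K : Type*} [AddCommGroup X] [Module ℂ X] [AddCommGroup X'] [Module ℂ X']
  [AddCommGroup Y] [Module ℂ Y] [AddCommGroup Z] [Module ℂ Z] [AddCommGroup K] [Module ℂ K]
  [AddCommGroup P] [Module ℂ P] [AddCommGroup P'] [Module ℂ P']

lemma nat_left (f : X →ₗ[ℂ] X') :
    (TensorProduct.assoc ℂ X' Y Z).toLinearMap ∘ₗ rTensor Z (rTensor Y f)
      = rTensor (Y ⊗[ℂ] Z) f ∘ₗ (TensorProduct.assoc ℂ X Y Z).toLinearMap := by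
  apply TensorProduct.ext_threefold; intro x y z; simp

lemma nat_left_symm (f : X →ₗ[ℂ] X') :
    rTensor Z (rTensor Y f) ∘ₗ (TensorProduct.assoc ℂ X Y Z).symm.toLinearMap
      = (TensorProduct.assoc ℂ X' Y Z).symm.toLinearMap ∘ₗ rTensor (Y ⊗[ℂ] Z) f := by
  ext x y z; simp

lemma rid_nat (f : X →ₗ[ℂ] K) (ψ : Y →ₗ[ℂ] ℂ) :
    f ∘ₗ (TensorProduct.rid ℂ X).toLinearMap ∘ₗ lTensor X ψ
      = (TensorProduct.rid ℂ K).toLinearMap ∘ₗ lTensor K ψ ∘ₗ rTensor Y f := by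
  apply TensorProduct.ext'; intro x y; simp

lemma cohL (ψ : Y ⊗[ℂ] Y →ₗ[ℂ] ℂ) (g : Y →ₗ[ℂ] Y ⊗[ℂ] Y) :
    rTensor Y (TensorProduct.rid ℂ X).toLinearMap ∘ₗ rTensor Y (lTensor X ψ) ∘ₗ
      rTensor Y (TensorProduct.assoc ℂ X Y Y).toLinearMap ∘ₗ
      (TensorProduct.assoc ℂ (X ⊗[ℂ] Y) Y Y).symm.toLinearMap ∘ₗ
      lTensor (X ⊗[ℂ] Y) g
    = lTensor X ((TensorProduct.lid ℂ Y).toLinearMap ∘ₗ rTensor Y ψ ∘ₗ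
        (TensorProduct.assoc ℂ Y Y Y).symm.toLinearMap ∘ₗ lTensor Y g) ∘ₗ
      (TensorProduct.assoc ℂ X Y Y).toLinearMap := by
  apply TensorProduct.ext_threefold
  intro x c b
  simp only [comp_apply, LinearEquiv.coe_coe, lTensor_tmul, TensorProduct.assoc_tmul]
  generalize g b = t
  induction t using TensorProduct.induction_on with
  | zero => simp
  | tmul b1 b2 => simp [TensorProduct.smul_tmul']
  | add u v hu hv =>
      simp only [TensorProduct.tmul_add, map_add] at hu hv ⊢
      rw [hu, hv]

lemma cohR (ψ : Y ⊗[ℂ] Y →ₗ[ℂ] ℂ) (g : Y →ₗ[ℂ] Y ⊗[ℂ] Y) :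
    (TensorProduct.rid ℂ (X ⊗[ℂ] Y)).toLinearMap ∘ₗ lTensor (X ⊗[ℂ] Y) ψ ∘ₗ
      (TensorProduct.assoc ℂ (X ⊗[ℂ] Y) Y Y).toLinearMap ∘ₗ
      rTensor Y (TensorProduct.assoc ℂ X Y Y).symm.toLinearMap ∘ₗ
      rTensor Y (lTensor X g)
    = lTensor X ((TensorProduct.rid ℂ Y).toLinearMap ∘ₗ lTensor Y ψ ∘ₗ
        (TensorProduct.assoc ℂ Y Y Y).toLinearMap ∘ₗ rTensor Y g) ∘ₗ
      (TensorProduct.assoc ℂ X Y Y).toLinearMap := by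
  apply TensorProduct.ext_threefold
  intro x c b
  simp only [comp_apply, LinearEquiv.coe_coe, lTensor_tmul, rTensor_tmul, TensorProduct.assoc_tmul]
  generalize g c = t
  induction t using TensorProduct.induction_on with
  | zero => simp
  | tmul c1 c2 => simp [TensorProduct.smul_tmul']
  | add u v hu hv =>
      simp only [TensorProduct.tmul_add, TensorProduct.add_tmul, map_add] at hu hv ⊢
      rw [hu, hv]

end Helpers

/-- For a quantum bi-element `(H, Q1, Q2)` of a pair of
Q-systems in Hilb, the map `P := Q1∘Q2* : H ⊗ B → A ⊗ H` satisfies the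
comultiplicativity axiom of a quantum function from `B` to `A`:
`(mA* ⊗ 1_H)∘P = (1_A ⊗ P)∘(P ⊗ 1_B)∘(1_H ⊗ mB*)` as linear maps
`H ⊗ B → (A ⊗ A) ⊗ H` (canonical associators written explicitly). -/
theorem stmt5
    (A B H : Type*)
    [NormedAddCommGroup A] [InnerProductSpace ℂ A] [FiniteDimensional ℂ A]
    [NormedAddCommGroup B] [InnerProductSpace ℂ B] [FiniteDimensional ℂ B]
    [NormedAddCommGroup H] [InnerProductSpace ℂ H] [FiniteDimensional ℂ H]
    (pAA : A ⊗[ℂ] A → A ⊗[ℂ] A → ℂ) (hpAA : IsTensorPairing pAA)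
    (pBB : B ⊗[ℂ] B → B ⊗[ℂ] B → ℂ) (hpBB : IsTensorPairing pBB)
    (pAH : A ⊗[ℂ] H → A ⊗[ℂ] H → ℂ) (hpAH : IsTensorPairing pAH)
    (pHB : H ⊗[ℂ] B → H ⊗[ℂ] B → ℂ) (hpHB : IsTensorPairing pHB)
    (mA : A ⊗[ℂ] A →ₗ[ℂ] A) (iA : ℂ →ₗ[ℂ] A)
    (mAS : A →ₗ[ℂ] A ⊗[ℂ] A) (iAS : A →ₗ[ℂ] ℂ)
    (hmAS : AdjointWRT pAA (innerP A) mA mAS)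
    (hiAS : AdjointWRT (innerP ℂ) (innerP A) iA iAS)
    (hQA : QSystemEqs A mA iA mAS)
    (mB : B ⊗[ℂ] B →ₗ[ℂ] B) (iB : ℂ →ₗ[ℂ] B)
    (mBS : B →ₗ[ℂ] B ⊗[ℂ] B) (iBS : B →ₗ[ℂ] ℂ)
    (hmBS : AdjointWRT pBB (innerP B) mB mBS)
    (hiBS : AdjointWRT (innerP ℂ) (innerP B) iB iBS)
    (hQB : QSystemEqs B mB iB mBS)
    (Q1 : H →ₗ[ℂ] A ⊗[ℂ] H) (Q1S : A ⊗[ℂ] H →ₗ[ℂ] H)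
    (hQ1S : AdjointWRT (innerP H) pAH Q1 Q1S)
    (Q2 : H →ₗ[ℂ] H ⊗[ℂ] B) (Q2S : H ⊗[ℂ] B →ₗ[ℂ] H)
    (hQ2S : AdjointWRT (innerP H) pHB Q2 Q2S)
    (hQBE : QBEEqs A B H mA iAS mAS mB iBS mBS Q1 Q2 Q1S Q2S)
    :
    rTensor H mAS ∘ₗ (Q1 ∘ₗ Q2S) =
        (TensorProduct.assoc ℂ A A H).symm.toLinearMap ∘ₗ
          lTensor A (Q1 ∘ₗ Q2S) ∘ₗ
          (TensorProduct.assoc ℂ A H B).toLinearMap ∘ₗ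
          rTensor B (Q1 ∘ₗ Q2S) ∘ₗ
          (TensorProduct.assoc ℂ H B B).symm.toLinearMap ∘ₗ
          lTensor H mBS := by
  obtain ⟨hBassoc, hBunitl, hBunitr, hBfrob1, hBfrob2, hBsep⟩ := hQB
  obtain ⟨h1a, h1b, h1c, h2a, h2b, h3a, h3b⟩ := hQBE
  -- unit–counit lemmas
  have L1a : (TensorProduct.lid ℂ B).toLinearMap ∘ₗ rTensor B iBS ∘ₗ mBS
      = (LinearMap.id : B →ₗ[ℂ] B) := by
    apply LinearMap.ext; intro x
    simp only [comp_apply, LinearEquiv.coe_coe, id_coe, id_eq]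
    have key : ∀ y : B,
        (inner ℂ y ((TensorProduct.lid ℂ B) (rTensor B iBS (mBS x))) : ℂ) = (inner ℂ y x : ℂ) := by
      intro y
      have keyt : ∀ t : B ⊗[ℂ] B,
          (inner ℂ y ((TensorProduct.lid ℂ B) (rTensor B iBS t)) : ℂ)
            = pBB ((iB 1) ⊗ₜ[ℂ] y) t := by
        intro t
        induction t using TensorProduct.induction_on with
        | zero =>
            have h0 : pBB ((iB 1) ⊗ₜ[ℂ] y) 0 = 0 := by
              have := hpBB.2.2.2.1 0 ((iB 1) ⊗ₜ[ℂ] y) 0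
              simpa using this
            simp [h0]
        | tmul b1 b2 =>
            rw [hpBB.2.2.2.2]
            have hi := hiBS 1 b1
            simp only [innerP] at hi
            rw [hi]
            simp [RCLike.inner_apply, TensorProduct.lid_tmul, inner_smul_right]
        | add u v hu hv =>
            simp only [map_add, inner_add_right]
            rw [hpBB.2.1, hu, hv]
      rw [keyt, ← hmBS ((iB 1) ⊗ₜ[ℂ] y) x]
      have hy : mB ((iB 1) ⊗ₜ[ℂ] y) = y := by
        have := LinearMap.congr_fun hBunitl ((1 : ℂ) ⊗ₜ[ℂ] y)
        simpa using this
      simp only [innerP, hy]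
    have hzero : (inner ℂ ((TensorProduct.lid ℂ B) (rTensor B iBS (mBS x)) - x)
        ((TensorProduct.lid ℂ B) (rTensor B iBS (mBS x)) - x) : ℂ) = 0 := by
      rw [inner_sub_right, key, sub_self]
    exact sub_eq_zero.mp (inner_self_eq_zero.mp hzero)
  have L1b : (TensorProduct.rid ℂ B).toLinearMap ∘ₗ lTensor B iBS ∘ₗ mBS
      = (LinearMap.id : B →ₗ[ℂ] B) := by
    apply LinearMap.ext; intro x
    simp only [comp_apply, LinearEquiv.coe_coe, id_coe, id_eq]
    have key : ∀ y : B,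
        (inner ℂ y ((TensorProduct.rid ℂ B) (lTensor B iBS (mBS x))) : ℂ) = (inner ℂ y x : ℂ) := by
      intro y
      have keyt : ∀ t : B ⊗[ℂ] B,
          (inner ℂ y ((TensorProduct.rid ℂ B) (lTensor B iBS t)) : ℂ)
            = pBB (y ⊗ₜ[ℂ] (iB 1)) t := by
        intro t
        induction t using TensorProduct.induction_on with
        | zero =>
            have h0 : pBB (y ⊗ₜ[ℂ] (iB 1)) 0 = 0 := by
              have := hpBB.2.2.2.1 0 (y ⊗ₜ[ℂ] (iB 1)) 0
              simpa using this
            simp [h0]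
        | tmul b1 b2 =>
            rw [hpBB.2.2.2.2]
            have hi := hiBS 1 b2
            simp only [innerP] at hi
            rw [hi]
            simp [RCLike.inner_apply, TensorProduct.rid_tmul, inner_smul_right]
            ring
        | add u v hu hv =>
            simp only [map_add, inner_add_right]
            rw [hpBB.2.1, hu, hv]
      rw [keyt, ← hmBS (y ⊗ₜ[ℂ] (iB 1)) x]
      have hy : mB (y ⊗ₜ[ℂ] (iB 1)) = y := by
        have := LinearMap.congr_fun hBunitr (y ⊗ₜ[ℂ] (1 : ℂ))
        simpa using this
      simp only [innerP, hy]
    have hzero : (inner ℂ ((TensorProduct.rid ℂ B) (lTensor B iBS (mBS x)) - x)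
        ((TensorProduct.rid ℂ B) (lTensor B iBS (mBS x)) - x) : ℂ) = 0 := by
      rw [inner_sub_right, key, sub_self]
    exact sub_eq_zero.mp (inner_self_eq_zero.mp hzero)
  -- the two Frobenius-derived multiplication formulas
  have hG1 : (TensorProduct.lid ℂ B).toLinearMap ∘ₗ rTensor B (iBS ∘ₗ mB) ∘ₗ
      (TensorProduct.assoc ℂ B B B).symm.toLinearMap ∘ₗ lTensor B mBS = mB := by
    apply LinearMap.ext; intro u
    simp only [comp_apply, LinearEquiv.coe_coe, rTensor_comp]
    have f1 := LinearMap.congr_fun hBfrob1 u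
    simp only [comp_apply, LinearEquiv.coe_coe] at f1
    rw [f1]
    have := LinearMap.congr_fun L1a (mB u)
    simpa using this
  have hG2 : (TensorProduct.rid ℂ B).toLinearMap ∘ₗ lTensor B (iBS ∘ₗ mB) ∘ₗ
      (TensorProduct.assoc ℂ B B B).toLinearMap ∘ₗ rTensor B mBS = mB := by
    apply LinearMap.ext; intro u
    simp only [comp_apply, LinearEquiv.coe_coe, lTensor_comp]
    have f1 := LinearMap.congr_fun hBfrob2 u
    simp only [comp_apply, LinearEquiv.coe_coe] at f1
    rw [f1]
    have := LinearMap.congr_fun L1b (mB u)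
    simpa using this
  -- Q2S in folded form
  have hS : Q2S = (TensorProduct.rid ℂ H).toLinearMap ∘ₗ lTensor H (iBS ∘ₗ mB) ∘ₗ
      (TensorProduct.assoc ℂ H B B).toLinearMap ∘ₗ rTensor B Q2 := by
    apply LinearMap.ext; intro x
    rw [h3b]
    simp only [lTensor_comp, comp_apply, LinearEquiv.coe_coe]
  -- step A : Q2S ∘ Q2 = id
  have stepA : Q2S ∘ₗ Q2 = (LinearMap.id : H →ₗ[ℂ] H) := by
    apply LinearMap.ext; intro x
    simp only [comp_apply, id_coe, id_eq]
    rw [hS]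
    simp only [comp_apply, LinearEquiv.coe_coe]
    have hb := LinearMap.congr_fun h1b x
    simp only [comp_apply, LinearEquiv.coe_coe] at hb
    rw [hb, LinearEquiv.apply_symm_apply]
    have hcomp : lTensor H (iBS ∘ₗ mB) ∘ₗ lTensor H mBS = lTensor H iBS := by
      rw [← lTensor_comp, comp_assoc, hBsep, comp_id]
    have hc := LinearMap.congr_fun hcomp (Q2 x)
    simp only [comp_apply] at hc
    rw [hc]
    have := LinearMap.congr_fun h2b x
    simpa using this
  -- step B : rTensor B Q2S ∘ assoc⁻¹ ∘ lTensor H mBS = Q2 ∘ Q2S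
  have sideL : rTensor B Q2S ∘ₗ (TensorProduct.assoc ℂ H B B).symm.toLinearMap ∘ₗ
      lTensor H mBS = lTensor H mB ∘ₗ (TensorProduct.assoc ℂ H B B).toLinearMap ∘ₗ
      rTensor B Q2 := by
    apply LinearMap.ext; intro x
    simp only [comp_apply, LinearEquiv.coe_coe]
    rw [hS]
    simp only [rTensor_comp, comp_apply, LinearEquiv.coe_coe]
    have n1 := LinearMap.congr_fun (nat_left_symm (Y := B) (Z := B) Q2) ((lTensor H mBS) x)
    simp only [comp_apply, LinearEquiv.coe_coe] at n1
    rw [n1]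
    have n2 := LinearMap.congr_fun
      ((LinearMap.rTensor_comp_lTensor (f := Q2) (g := mBS)).trans (LinearMap.lTensor_comp_rTensor (f := Q2) (g := mBS)).symm) x
    simp only [comp_apply] at n2
    rw [n2]
    have c := LinearMap.congr_fun (cohL (X := H) (Y := B) (iBS ∘ₗ mB) mBS) (rTensor B Q2 x)
    simp only [comp_apply, LinearEquiv.coe_coe] at c
    rw [c, hG1]
  have sideR : Q2 ∘ₗ Q2S = lTensor H mB ∘ₗ (TensorProduct.assoc ℂ H B B).toLinearMap ∘ₗ
      rTensor B Q2 := by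
    apply LinearMap.ext; intro x
    simp only [comp_apply, LinearEquiv.coe_coe]
    rw [hS]
    simp only [comp_apply, LinearEquiv.coe_coe]
    have r1 := LinearMap.congr_fun (rid_nat (X := H) (K := H ⊗[ℂ] B) Q2 (iBS ∘ₗ mB))
      ((TensorProduct.assoc ℂ H B B) (rTensor B Q2 x))
    simp only [comp_apply, LinearEquiv.coe_coe] at r1
    rw [r1]
    have n1 := LinearMap.congr_fun (nat_left (Y := B) (Z := B) Q2) (rTensor B Q2 x)
    simp only [comp_apply, LinearEquiv.coe_coe] at n1
    rw [← n1]
    have r2 := LinearMap.congr_fun (congrArg (rTensor B) h1b) x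
    simp only [rTensor_comp, comp_apply, LinearEquiv.coe_coe] at r2
    rw [r2]
    have c := LinearMap.congr_fun (cohR (X := H) (Y := B) (iBS ∘ₗ mB) mBS) (rTensor B Q2 x)
    simp only [comp_apply, LinearEquiv.coe_coe] at c
    rw [c, hG2]
  have stepB : rTensor B Q2S ∘ₗ (TensorProduct.assoc ℂ H B B).symm.toLinearMap ∘ₗ
      lTensor H mBS = Q2 ∘ₗ Q2S := sideL.trans sideR.symm
  -- final assembly
  apply LinearMap.ext; intro x
  simp only [rTensor_comp, lTensor_comp, comp_apply, LinearEquiv.coe_coe]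
  have b1 := LinearMap.congr_fun stepB x
  simp only [comp_apply, LinearEquiv.coe_coe] at b1
  rw [b1]
  have hcc := LinearMap.congr_fun h1c (Q2S x)
  simp only [comp_apply, LinearEquiv.coe_coe] at hcc
  rw [← hcc]
  have hid : lTensor A Q2S ∘ₗ lTensor A Q2 = LinearMap.id := by
    rw [← lTensor_comp, stepA, lTensor_id]
  have hid' := LinearMap.congr_fun hid (Q1 (Q2S x))
  simp only [comp_apply, id_coe, id_eq] at hid'
  rw [hid']
  have haa := LinearMap.congr_fun h1a (Q2S x)
  simp only [comp_apply, LinearEquiv.coe_coe] at haa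
  rw [haa, LinearEquiv.symm_apply_apply]
end
end

section
/- Let (A, m_A, i_A) and (B, m_B, i_B) be Q-systems in Hilb, let (H, Q1, Q2) be a quantum bi-element of the pair (A, B), and set P := Q1∘Q2* : H ⊗ B → A ⊗ H. Then P satisfies the adjoint axiom of a quantum function from B to A: P* = ((i_A*∘m_A) ⊗ 1_H ⊗ 1_B)∘(1_A ⊗ P ⊗ 1_B)∘(1_A ⊗ 1_H ⊗ (m_B*∘i_B)) as linear maps A ⊗ H → H ⊗ B (identifying along the canonical associators and unitors). -/
/-!
Q-systems in the C*-tensor category `Hilb` of finite dimensional complex Hilbert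
spaces.  Tensor products of Hilbert spaces carry the natural inner product
`⟪a ⊗ b, c ⊗ d⟫ = ⟪a, c⟫ * ⟪b, d⟫`; since Mathlib does not provide this inner
product structure on `TensorProduct`, we encode it by a pairing
`p : E ⊗ F → E ⊗ F → ℂ` together with the (uniquely determining) requirements
that it is sesquilinear and takes the natural values on elementary tensors
(`IsTensorPairing`).  Hilbert space adjoints are encoded as data together with
their (uniquely determining) defining property w.r.t. these pairings
(`AdjointWRT`).  Identifications along the canonical associator and unitor
isomorphisms are written explicitly via `TensorProduct.assoc`, `lid`, `rid`.
-/

open scoped TensorProduct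
open LinearMap

noncomputable section

section PairingLemmas

variable {E F : Type*} [NormedAddCommGroup E] [InnerProductSpace ℂ E]
    [NormedAddCommGroup F] [InnerProductSpace ℂ F]
    {p : E ⊗[ℂ] F → E ⊗[ℂ] F → ℂ}

/-- `p x ·` as a linear map. -/
def pairRight (hp : IsTensorPairing p) (x : E ⊗[ℂ] F) : E ⊗[ℂ] F →ₗ[ℂ] ℂ where
  toFun := p x
  map_add' := fun y y' => hp.2.1 x y y'
  map_smul' := fun c y => hp.2.2.2.1 c x y

lemma pair_zero_right (hp : IsTensorPairing p) (x : E ⊗[ℂ] F) : p x 0 = 0 :=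
  (pairRight hp x).map_zero

lemma pair_zero_left (hp : IsTensorPairing p) (y : E ⊗[ℂ] F) : p 0 y = 0 := by
  have h := hp.1 0 0 y; simpa using h.symm

lemma pair_conj_symm (hp : IsTensorPairing p) (x y : E ⊗[ℂ] F) :
    p x y = (starRingEnd ℂ) (p y x) := by
  induction x using TensorProduct.induction_on with
  | zero => simp [pair_zero_left hp, pair_zero_right hp]
  | tmul a b =>
    induction y using TensorProduct.induction_on with
    | zero => simp [pair_zero_left hp, pair_zero_right hp]
    | tmul c d => simp [hp.2.2.2.2, map_mul, inner_conj_symm]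
    | add y₁ y₂ h1 h2 => rw [hp.2.1, hp.1, map_add, h1, h2]
  | add x₁ x₂ h1 h2 => rw [hp.1, hp.2.1, map_add, h1, h2]

lemma pair_nondeg [FiniteDimensional ℂ E] [FiniteDimensional ℂ F]
    (hp : IsTensorPairing p) {z : E ⊗[ℂ] F} (hz : ∀ x, p x z = 0) : z = 0 := by
  classical
  set e := stdOrthonormalBasis ℂ E
  set f := stdOrthonormalBasis ℂ F
  set b := e.toBasis.tensorProduct f.toBasis with hb
  have key : ∀ ij, b.repr z ij = 0 := by
    rintro ⟨i, j⟩
    have hx := hz (e i ⊗ₜ f j)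
    have hsum : p (e i ⊗ₜ f j) z
        = ∑ kl : (Fin (Module.finrank ℂ E)) × (Fin (Module.finrank ℂ F)),
            b.repr z kl * p (e i ⊗ₜ f j) (b kl) := by
      conv_lhs => rw [← b.sum_repr z]
      rw [show p (e i ⊗ₜ f j) = pairRight hp (e i ⊗ₜ f j) from rfl, map_sum]
      simp [pairRight]
    rw [hsum] at hx
    rw [Finset.sum_eq_single (i, j)] at hx
    · have hbij : b (i, j) = e i ⊗ₜ f j := by
        simp [hb, Module.Basis.tensorProduct_apply]
      rw [hbij, hp.2.2.2.2, orthonormal_iff_ite.mp e.orthonormal,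
        orthonormal_iff_ite.mp f.orthonormal] at hx
      simpa using hx
    · rintro ⟨k, l⟩ - hkl
      have hbkl : b (k, l) = e k ⊗ₜ f l := by simp [hb, Module.Basis.tensorProduct_apply]
      rw [hbkl, hp.2.2.2.2, orthonormal_iff_ite.mp e.orthonormal,
        orthonormal_iff_ite.mp f.orthonormal]
      have : ¬(i = k ∧ j = l) := by
        intro ⟨h1, h2⟩; exact hkl (by simp [h1, h2])
      by_cases h1 : i = k
      · have h2 : j ≠ l := fun h2 => this ⟨h1, h2⟩
        simp [h2]
      · simp [h1]
    · intro h; exact absurd (Finset.mem_univ _) h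
  simpa using b.repr.map_eq_zero_iff.mp (by ext ij; simpa using key ij)

end PairingLemmas

/-- "Cap on the left": `a ⊗ (a' ⊗ v) ↦ ε(a ⊗ a') • v`. -/
def capMap {A H' : Type*} [AddCommGroup A] [Module ℂ A] [AddCommGroup H'] [Module ℂ H']
    (eps : A ⊗[ℂ] A →ₗ[ℂ] ℂ) : A ⊗[ℂ] (A ⊗[ℂ] H') →ₗ[ℂ] H' :=
  (TensorProduct.lid ℂ H').toLinearMap ∘ₗ rTensor H' eps ∘ₗ
    (TensorProduct.assoc ℂ A A H').symm.toLinearMap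

lemma capMap_tmul {A H' : Type*} [AddCommGroup A] [Module ℂ A] [AddCommGroup H'] [Module ℂ H']
    (eps : A ⊗[ℂ] A →ₗ[ℂ] ℂ) (a a' : A) (v : H') :
    capMap eps (a ⊗ₜ (a' ⊗ₜ v)) = eps (a ⊗ₜ a') • v := by
  simp [capMap]

/-- "Cap on the right": `(k ⊗ b') ⊗ b ↦ ε(b' ⊗ b) • k`. -/
def capR {B H' : Type*} [AddCommGroup B] [Module ℂ B] [AddCommGroup H'] [Module ℂ H']
    (eps : B ⊗[ℂ] B →ₗ[ℂ] ℂ) : (H' ⊗[ℂ] B) ⊗[ℂ] B →ₗ[ℂ] H' :=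
  (TensorProduct.rid ℂ H').toLinearMap ∘ₗ lTensor H' eps ∘ₗ
    (TensorProduct.assoc ℂ H' B B).toLinearMap

lemma capR_tmul {B H' : Type*} [AddCommGroup B] [Module ℂ B] [AddCommGroup H'] [Module ℂ H']
    (eps : B ⊗[ℂ] B →ₗ[ℂ] ℂ) (k : H') (b' b : B) :
    capR eps ((k ⊗ₜ b') ⊗ₜ b) = eps (b' ⊗ₜ b) • k := by
  simp [capR]

set_option maxHeartbeats 2000000 in
/-- For a quantum bi-element `(H, Q1, Q2)` of a pair of
Q-systems in Hilb, the map `P := Q1∘Q2* : H ⊗ B → A ⊗ H` satisfies the adjoint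
axiom of a quantum function from `B` to `A`:
`P* = ((iA*∘mA) ⊗ 1_H ⊗ 1_B)∘(1_A ⊗ P ⊗ 1_B)∘(1_A ⊗ 1_H ⊗ (mB*∘iB))` as linear
maps `A ⊗ H → H ⊗ B` (identifying along the canonical associators and
unitors, here written explicitly; `PS` plays the role of the adjoint `P*`). -/
theorem stmt6
    (A B H : Type*)
    [NormedAddCommGroup A] [InnerProductSpace ℂ A] [FiniteDimensional ℂ A]
    [NormedAddCommGroup B] [InnerProductSpace ℂ B] [FiniteDimensional ℂ B]
    [NormedAddCommGroup H] [InnerProductSpace ℂ H] [FiniteDimensional ℂ H]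
    (pAA : A ⊗[ℂ] A → A ⊗[ℂ] A → ℂ) (hpAA : IsTensorPairing pAA)
    (pBB : B ⊗[ℂ] B → B ⊗[ℂ] B → ℂ) (hpBB : IsTensorPairing pBB)
    (pAH : A ⊗[ℂ] H → A ⊗[ℂ] H → ℂ) (hpAH : IsTensorPairing pAH)
    (pHB : H ⊗[ℂ] B → H ⊗[ℂ] B → ℂ) (hpHB : IsTensorPairing pHB)
    (mA : A ⊗[ℂ] A →ₗ[ℂ] A) (iA : ℂ →ₗ[ℂ] A)
    (mAS : A →ₗ[ℂ] A ⊗[ℂ] A) (iAS : A →ₗ[ℂ] ℂ)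
    (hmAS : AdjointWRT pAA (innerP A) mA mAS)
    (hiAS : AdjointWRT (innerP ℂ) (innerP A) iA iAS)
    (hQA : QSystemEqs A mA iA mAS)
    (mB : B ⊗[ℂ] B →ₗ[ℂ] B) (iB : ℂ →ₗ[ℂ] B)
    (mBS : B →ₗ[ℂ] B ⊗[ℂ] B) (iBS : B →ₗ[ℂ] ℂ)
    (hmBS : AdjointWRT pBB (innerP B) mB mBS)
    (hiBS : AdjointWRT (innerP ℂ) (innerP B) iB iBS)
    (hQB : QSystemEqs B mB iB mBS)
    (Q1 : H →ₗ[ℂ] A ⊗[ℂ] H) (Q1S : A ⊗[ℂ] H →ₗ[ℂ] H)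
    (hQ1S : AdjointWRT (innerP H) pAH Q1 Q1S)
    (Q2 : H →ₗ[ℂ] H ⊗[ℂ] B) (Q2S : H ⊗[ℂ] B →ₗ[ℂ] H)
    (hQ2S : AdjointWRT (innerP H) pHB Q2 Q2S)
    (hQBE : QBEEqs A B H mA iAS mAS mB iBS mBS Q1 Q2 Q1S Q2S)
    (PS : A ⊗[ℂ] H →ₗ[ℂ] H ⊗[ℂ] B)
    (hPS : AdjointWRT pHB pAH (Q1 ∘ₗ Q2S) PS) :
    PS = (TensorProduct.lid ℂ (H ⊗[ℂ] B)).toLinearMap ∘ₗ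
        rTensor (H ⊗[ℂ] B) (iAS ∘ₗ mA) ∘ₗ
        (TensorProduct.assoc ℂ A A (H ⊗[ℂ] B)).symm.toLinearMap ∘ₗ
        lTensor A (TensorProduct.assoc ℂ A H B).toLinearMap ∘ₗ
        lTensor A (rTensor B (Q1 ∘ₗ Q2S)) ∘ₗ
        lTensor A (TensorProduct.assoc ℂ H B B).symm.toLinearMap ∘ₗ
        (TensorProduct.assoc ℂ A H (B ⊗[ℂ] B)).toLinearMap ∘ₗ
        lTensor (A ⊗[ℂ] H) (mBS ∘ₗ iB) ∘ₗ
        (TensorProduct.rid ℂ (A ⊗[ℂ] H)).symm.toLinearMap := by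
  classical
  obtain ⟨-, hBunitl, hBunitr, hBfrob, -, -⟩ := hQB
  obtain ⟨-, -, hQint, -, -, hQ1Sdef, hQ2Sdef⟩ := hQBE
  set εA : A ⊗[ℂ] A →ₗ[ℂ] ℂ := iAS ∘ₗ mA with hεA
  set εB : B ⊗[ℂ] B →ₗ[ℂ] ℂ := iBS ∘ₗ mB with hεB
  have hQ1Spt : ∀ (a : A) (k : H), Q1S (a ⊗ₜ k) = capMap εA (a ⊗ₜ Q1 k) := by
    intro a k
    rw [hQ1Sdef]
    simp [capMap, hεA, rTensor_comp, LinearMap.comp_apply]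
  have hQ2Spt : ∀ (k : H) (b : B), Q2S (k ⊗ₜ b) = capR εB (Q2 k ⊗ₜ b) := by
    intro k b
    rw [hQ2Sdef]
    simp [capR, hεB, lTensor_comp, LinearMap.comp_apply]
  -- Step 1: `PS = Q2 ∘ₗ Q1S` by uniqueness of adjoints.
  have hPSQ : PS = Q2 ∘ₗ Q1S := by
    apply LinearMap.ext; intro y
    have key : ∀ x, pHB x (PS y) = pHB x ((Q2 ∘ₗ Q1S) y) := by
      intro x
      rw [← hPS x y]
      have h1 : pAH ((Q1 ∘ₗ Q2S) x) y = innerP H (Q2S x) (Q1S y) := hQ1S (Q2S x) y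
      have h2 : innerP H (Q1S y) (Q2S x) = pHB (Q2 (Q1S y)) x := (hQ2S (Q1S y) x).symm
      have h3 : innerP H (Q2S x) (Q1S y)
          = (starRingEnd ℂ) (innerP H (Q1S y) (Q2S x)) := by
        simp only [innerP]
        exact (inner_conj_symm (𝕜 := ℂ) (Q2S x) (Q1S y)).symm
      rw [h1, h3, h2, ← pair_conj_symm hpHB]
      rfl
    have hz : ∀ x, pHB x (PS y - (Q2 ∘ₗ Q1S) y) = 0 := by
      intro x
      have hsub : pHB x (PS y - (Q2 ∘ₗ Q1S) y)
          = pHB x (PS y) - pHB x ((Q2 ∘ₗ Q1S) y) :=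
        map_sub (pairRight hpHB x) _ _
      rw [hsub, key x, sub_self]
    exact sub_eq_zero.mp (pair_nondeg hpHB hz)
  rw [hPSQ]
  -- Step 2: the purely algebraic identity `Q2 ∘ₗ Q1S = RHS`.
  apply TensorProduct.ext'
  intro a k
  have capdef : ∀ z : A ⊗[ℂ] (A ⊗[ℂ] (H ⊗[ℂ] B)),
      (TensorProduct.lid ℂ (H ⊗[ℂ] B)) (rTensor (H ⊗[ℂ] B) εA
        ((TensorProduct.assoc ℂ A A (H ⊗[ℂ] B)).symm z)) = capMap εA z :=
    fun z => rfl
  have hCA : ∀ (u : A ⊗[ℂ] H) (b₂ : B),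
      capMap εA (a ⊗ₜ (TensorProduct.assoc ℂ A H B (u ⊗ₜ b₂)))
        = capMap εA (a ⊗ₜ u) ⊗ₜ b₂ := by
    intro u b₂
    induction u using TensorProduct.induction_on with
    | zero => simp
    | tmul a₁ h₁ => simp [capMap_tmul, TensorProduct.smul_tmul']
    | add u₁ u₂ ih1 ih2 => simp only [TensorProduct.add_tmul, TensorProduct.tmul_add, map_add, ih1, ih2]
  -- the "snake" identity for B
  have hsnake0 : ∀ b : B, (TensorProduct.lid ℂ B) (rTensor B iBS (mBS b)) = b := by
    intro b
    apply ext_inner_left ℂ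
    intro c
    have hw : ∀ w : B ⊗[ℂ] B,
        (inner ℂ c ((TensorProduct.lid ℂ B) (rTensor B iBS w)) : ℂ)
          = pBB (iB 1 ⊗ₜ c) w := by
      intro w
      induction w using TensorProduct.induction_on with
      | zero => simp [pair_zero_right hpBB]
      | tmul u v =>
        have hu : (inner ℂ (iB 1) u : ℂ) = iBS u := by
          have h := hiBS 1 u
          simpa [innerP, RCLike.inner_apply] using h
        simp only [rTensor_tmul, LinearEquiv.coe_coe, TensorProduct.lid_tmul,
          inner_smul_right, hpBB.2.2.2.2, hu]
      | add w₁ w₂ ih1 ih2 => simp only [map_add, inner_add_right, hpBB.2.1, ih1, ih2]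
    rw [hw (mBS b), ← hmBS (iB 1 ⊗ₜ c) b]
    have hc : mB (iB 1 ⊗ₜ c) = c := by
      have h := LinearMap.congr_fun hBunitl ((1 : ℂ) ⊗ₜ c)
      simpa using h
    rw [show (innerP B (mB (iB 1 ⊗ₜ c)) b : ℂ) = inner ℂ (mB (iB 1 ⊗ₜ c)) b from rfl, hc]
  have hsnake : ∀ b' : B,
      (TensorProduct.lid ℂ B) (rTensor B iBS (rTensor B mB
        ((TensorProduct.assoc ℂ B B B).symm (b' ⊗ₜ mBS (iB 1))))) = b' := by
    intro b'
    have h1 : rTensor B mB ((TensorProduct.assoc ℂ B B B).symm (b' ⊗ₜ mBS (iB 1))) = mBS b' := by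
      have h := LinearMap.congr_fun hBfrob (b' ⊗ₜ iB 1)
      simp only [LinearMap.comp_apply, lTensor_tmul, LinearEquiv.coe_coe] at h
      have h2 : mB (b' ⊗ₜ iB 1) = b' := by
        have h3 := LinearMap.congr_fun hBunitr (b' ⊗ₜ (1 : ℂ))
        simpa using h3
      rw [h2] at h
      exact h
    rw [h1, hsnake0]
  have hG2 : ∀ v : H ⊗[ℂ] B,
      rTensor B (capR εB) ((TensorProduct.assoc ℂ (H ⊗[ℂ] B) B B).symm (v ⊗ₜ mBS (iB 1))) = v := by
    intro v
    induction v using TensorProduct.induction_on with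
    | zero => simp
    | tmul k' b' =>
      have inner_claim : ∀ w : B ⊗[ℂ] B,
          rTensor B (capR εB)
            ((TensorProduct.assoc ℂ (H ⊗[ℂ] B) B B).symm ((k' ⊗ₜ b') ⊗ₜ w))
          = k' ⊗ₜ ((TensorProduct.lid ℂ B) (rTensor B iBS (rTensor B mB
              ((TensorProduct.assoc ℂ B B B).symm (b' ⊗ₜ w))))) := by
        intro w
        induction w using TensorProduct.induction_on with
        | zero => simp
        | tmul b₁ b₂ =>
          simp only [LinearEquiv.coe_coe, TensorProduct.assoc_symm_tmul, rTensor_tmul,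
            capR_tmul, hεB, LinearMap.comp_apply, TensorProduct.lid_tmul]
          rw [TensorProduct.smul_tmul]
        | add w₁ w₂ ih1 ih2 => simp only [TensorProduct.tmul_add, map_add, ih1, ih2]
      rw [inner_claim (mBS (iB 1)), hsnake b']
    | add v₁ v₂ ih1 ih2 => simp only [TensorProduct.add_tmul, map_add, ih1, ih2]
  -- main induction over η
  have hMAIN : ∀ w : B ⊗[ℂ] B,
      capMap εA (a ⊗ₜ (TensorProduct.assoc ℂ A H B
        (rTensor B (Q1 ∘ₗ Q2S) ((TensorProduct.assoc ℂ H B B).symm (k ⊗ₜ w)))))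
      = rTensor B (Q1S ∘ₗ TensorProduct.mk ℂ A H a)
          (rTensor B (capR εB)
            ((TensorProduct.assoc ℂ (H ⊗[ℂ] B) B B).symm (Q2 k ⊗ₜ w))) := by
    intro w
    induction w using TensorProduct.induction_on with
    | zero => simp
    | tmul b₁ b₂ =>
      simp only [lTensor_tmul, LinearEquiv.coe_coe, TensorProduct.assoc_symm_tmul,
        rTensor_tmul, LinearMap.comp_apply, TensorProduct.mk_apply]
      rw [hCA (Q1 (Q2S (k ⊗ₜ b₁))) b₂, ← hQ1Spt, ← hQ2Spt]
    | add w₁ w₂ ih1 ih2 => simp only [TensorProduct.tmul_add, map_add, ih1, ih2]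
  -- put everything together
  simp only [LinearMap.comp_apply, LinearEquiv.coe_coe, TensorProduct.rid_symm_apply,
    lTensor_tmul, TensorProduct.assoc_tmul]
  rw [capdef, hMAIN (mBS (iB 1)), hG2 (Q2 k)]
  -- left-hand side
  have hN1 : ∀ w : A ⊗[ℂ] H,
      Q2 (capMap εA (a ⊗ₜ w)) = capMap εA (a ⊗ₜ lTensor A Q2 w) := by
    intro w
    induction w using TensorProduct.induction_on with
    | zero => simp
    | tmul a' k' => simp [capMap_tmul, lTensor_tmul]
    | add w₁ w₂ ih1 ih2 => simp only [TensorProduct.tmul_add, map_add, ih1, ih2]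
  have hN2 : ∀ v : H ⊗[ℂ] B,
      capMap εA (a ⊗ₜ (TensorProduct.assoc ℂ A H B (rTensor B Q1 v)))
      = rTensor B (Q1S ∘ₗ TensorProduct.mk ℂ A H a) v := by
    intro v
    induction v using TensorProduct.induction_on with
    | zero => simp
    | tmul k' b' =>
      simp only [rTensor_tmul, LinearMap.comp_apply, TensorProduct.mk_apply]
      rw [hCA (Q1 k') b', ← hQ1Spt]
    | add v₁ v₂ ih1 ih2 => simp only [TensorProduct.tmul_add, map_add, ih1, ih2]
  have hint : lTensor A Q2 (Q1 k)
      = TensorProduct.assoc ℂ A H B (rTensor B Q1 (Q2 k)) := by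
    have h := LinearMap.congr_fun hQint k
    simp only [LinearMap.comp_apply, LinearEquiv.coe_coe] at h
    exact h
  rw [hQ1Spt a k, hN1 (Q1 k), hint, hN2 (Q2 k)]
end
end
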